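/- arXiv:1707.08942 — 8 statements merged into one kernel-verified Lean document; each statement's English description precedes it below -/
import Mathlib

section
/- Let a > 0, b ∈ ℝ, β > 0 with b − 1 < β < a. Then ∫_0^∞ x^{β−1} U(a,b;x) dx = Γ(a−β) Γ(β−b+1) Γ(β) / (Γ(a) Γ(a−b+1)). -/
open MeasureTheory Set

/-- The Tricomi confluent hypergeometric function, defined by its integral
representation for `a > 0` and `x > 0`. -/
noncomputable def tricomiU (a b x : ℝ) : ℝ :=
  (1 / Real.Gamma a) *
    ∫ t in Ioi (0:ℝ), t ^ (a - 1) * Real.exp (-(x * t)) * (1 + t) ^ (b - a - 1)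


lemma realBeta {p q : ℝ} (hp : 0 < p) (hq : 0 < q) :
    ∫ x in (0:ℝ)..1, x ^ (p - 1) * (1 - x) ^ (q - 1) =
      Real.Gamma p * Real.Gamma q / Real.Gamma (p + q) := by
  have key := Complex.Gamma_mul_Gamma_eq_betaIntegral
    (s := (p : ℂ)) (t := (q : ℂ)) (by simpa using hp) (by simpa using hq)
  have hbeta : Complex.betaIntegral p q =
      ((∫ x in (0:ℝ)..1, x ^ (p - 1) * (1 - x) ^ (q - 1) : ℝ) : ℂ) := by
    rw [Complex.betaIntegral, ← intervalIntegral.integral_ofReal]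
    refine intervalIntegral.integral_congr fun x hx => ?_
    rw [uIcc_of_le zero_le_one] at hx
    rw [Complex.ofReal_mul, Complex.ofReal_cpow hx.1,
      Complex.ofReal_cpow (by linarith [hx.2] : (0:ℝ) ≤ 1 - x)]
    push_cast
    ring
  rw [hbeta, ← Complex.ofReal_add, Complex.Gamma_ofReal, Complex.Gamma_ofReal,
    Complex.Gamma_ofReal, ← Complex.ofReal_mul, ← Complex.ofReal_mul] at key
  have := Complex.ofReal_inj.mp key
  have hG : Real.Gamma (p + q) ≠ 0 := (Real.Gamma_pos_of_pos (by linarith)).ne'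
  field_simp
  linarith [this]

lemma substAux : ((fun u : ℝ => u / (1 - u)) '' Ioo 0 1 = Ioi 0) ∧
    InjOn (fun u : ℝ => u / (1 - u)) (Ioo 0 1) ∧
    (∀ u ∈ Ioo (0:ℝ) 1, HasDerivWithinAt (fun u : ℝ => u / (1 - u))
      (1 / (1 - u) ^ 2) (Ioo 0 1) u) := by
  refine ⟨?_, ?_, ?_⟩
  · ext t
    simp only [mem_image, mem_Ioi, mem_Ioo]
    constructor
    · rintro ⟨u, ⟨h0, h1⟩, rfl⟩
      exact div_pos h0 (by linarith)
    · intro ht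
      exact ⟨t / (1 + t), ⟨by positivity, by rw [div_lt_one (by linarith)]; linarith⟩,
        by field_simp; ring⟩
  · intro u hu v hv h
    simp only [mem_Ioo] at hu hv
    have h1u : 1 - u ≠ 0 := by nlinarith [hu.2]
    have h1v : 1 - v ≠ 0 := by nlinarith [hv.2]
    field_simp at h
    nlinarith [h]
  · intro u hu
    simp only [mem_Ioo] at hu
    have h1 : 1 - u ≠ 0 := by nlinarith [hu.2]
    have := (hasDerivAt_id u).div ((hasDerivAt_id u).const_sub 1) h1
    refine this.hasDerivWithinAt.congr_deriv ?_
    simp only [id_eq]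
    ring

lemma betaIoi_integrand_eq {p q : ℝ} :
    ∀ u ∈ Ioo (0:ℝ) 1, |1 / (1 - u) ^ 2| •
      ((u / (1 - u)) ^ (p - 1) * (1 + u / (1 - u)) ^ (-(p + q))) =
      u ^ (p - 1) * (1 - u) ^ (q - 1) := by
  intro u hu
  simp only [mem_Ioo] at hu
  have h1 : (0:ℝ) < 1 - u := by linarith [hu.2]
  have h2 : 1 + u / (1 - u) = (1 - u)⁻¹ := by field_simp; ring
  have e1 : |1 / (1 - u) ^ 2| = (1 - u) ^ (-2 : ℝ) := by
    rw [abs_of_pos (by positivity), Real.rpow_neg h1.le, one_div]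
    congr 1
    rw [show ((2:ℝ) = ((2:ℕ):ℝ)) from by norm_num, Real.rpow_natCast]
  have e2 : (u / (1 - u)) ^ (p - 1) = u ^ (p - 1) * (1 - u) ^ (-(p - 1)) := by
    rw [Real.div_rpow hu.1.le h1.le, Real.rpow_neg h1.le, div_eq_mul_inv]
  have e3 : (1 + u / (1 - u)) ^ (-(p + q)) = (1 - u) ^ (p + q) := by
    rw [h2, ← Real.rpow_neg_one (1 - u), ← Real.rpow_mul h1.le]
    norm_num
  have e4 : (-2 : ℝ) + (-(p - 1) + (p + q)) = q - 1 := by ring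
  rw [smul_eq_mul, e1, e2, e3, show (1 - u) ^ (-2:ℝ) * (u ^ (p-1) * (1-u) ^ (-(p-1)) *
      (1-u) ^ (p+q)) = u ^ (p-1) * ((1-u) ^ (-2:ℝ) * ((1-u) ^ (-(p-1)) * (1-u) ^ (p+q)))
      from by ring, ← Real.rpow_add h1, ← Real.rpow_add h1, e4]

lemma integrableOn_betaIoo {p q : ℝ} (hp : 0 < p) (hq : 0 < q) :
    IntegrableOn (fun x : ℝ => x ^ (p - 1) * (1 - x) ^ (q - 1)) (Ioo 0 1) := by
  have h := (Complex.betaIntegral_convergent (u := (p:ℂ)) (v := (q:ℂ))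
    (by simpa using hp) (by simpa using hq))
  rw [intervalIntegrable_iff_integrableOn_Ioc_of_le zero_le_one] at h
  have h2 := (h.mono_set Ioo_subset_Ioc_self).norm
  refine IntegrableOn.congr_fun h2 (fun x hx => ?_) measurableSet_Ioo
  simp only [mem_Ioo] at hx
  rw [norm_mul,
    Complex.norm_cpow_eq_rpow_re_of_pos (by exact_mod_cast hx.1),
    show ((1:ℂ) - x) = ((1 - x : ℝ) : ℂ) by push_cast; ring,
    Complex.norm_cpow_eq_rpow_re_of_pos (by simpa using hx.2)]
  norm_num

lemma integrableOn_betaIoi {p q : ℝ} (hp : 0 < p) (hq : 0 < q) :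
    IntegrableOn (fun t : ℝ => t ^ (p - 1) * (1 + t) ^ (-(p + q))) (Ioi 0) := by
  obtain ⟨him, hinj, hder⟩ := substAux
  rw [← him, integrableOn_image_iff_integrableOn_abs_deriv_smul measurableSet_Ioo hder hinj]
  exact IntegrableOn.congr_fun (integrableOn_betaIoo hp hq)
    (fun u hu => (betaIoi_integrand_eq u hu).symm) measurableSet_Ioo

lemma betaIoi {p q : ℝ} (hp : 0 < p) (hq : 0 < q) :
    ∫ t in Ioi (0:ℝ), t ^ (p - 1) * (1 + t) ^ (-(p + q)) =
      Real.Gamma p * Real.Gamma q / Real.Gamma (p + q) := by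
  obtain ⟨him, hinj, hder⟩ := substAux
  rw [← him, integral_image_eq_integral_abs_deriv_smul measurableSet_Ioo hder hinj,
    setIntegral_congr_fun measurableSet_Ioo betaIoi_integrand_eq,
    ← integral_Ioc_eq_integral_Ioo, ← intervalIntegral.integral_of_le zero_le_one,
    realBeta hp hq]

lemma intGammaScaled {s t : ℝ} (hs : -1 < s) (ht : 0 < t) :
    IntegrableOn (fun x : ℝ => x ^ s * Real.exp (-(t * x))) (Ioi 0) := by
  have h := integrableOn_rpow_mul_exp_neg_mul_rpow hs zero_lt_one ht
  refine IntegrableOn.congr_fun h (fun x hx => ?_) measurableSet_Ioi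
  rw [Real.rpow_one]
  ring_nf


theorem stmt_4 (a b β : ℝ) (ha : 0 < a) (hβ : 0 < β) (hβb : b - 1 < β) (hβa : β < a) :
    ∫ x in Ioi (0:ℝ), x ^ (β - 1) * tricomiU a b x =
      Real.Gamma (a - β) * Real.Gamma (β - b + 1) * Real.Gamma β /
        (Real.Gamma a * Real.Gamma (a - b + 1)) := by
  set f : ℝ → ℝ → ℝ := fun t x =>
    t ^ (a - 1) * Real.exp (-(x * t)) * (1 + t) ^ (b - a - 1) * x ^ (β - 1) with hf
  have hfnn : ∀ t ∈ Ioi (0:ℝ), ∀ x ∈ Ioi (0:ℝ), 0 ≤ f t x := by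
    intro t ht x hx
    simp only [mem_Ioi] at ht hx
    have h1 : (0:ℝ) < 1 + t := by linarith
    positivity
  have hmeas : AEStronglyMeasurable (Function.uncurry f)
      ((volume.restrict (Ioi (0:ℝ))).prod (volume.restrict (Ioi (0:ℝ)))) := by
    apply Measurable.aestronglyMeasurable
    unfold Function.uncurry
    fun_prop
  have hsec : ∀ t ∈ Ioi (0:ℝ), Integrable (f t) (volume.restrict (Ioi (0:ℝ))) := by
    intro t ht
    simp only [mem_Ioi] at ht
    have h2 := (intGammaScaled (by linarith : (-1:ℝ) < β - 1) ht).const_mul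
      (t ^ (a - 1) * (1 + t) ^ (b - a - 1))
    refine IntegrableOn.congr_fun h2 (fun x hx => ?_) measurableSet_Ioi
    simp only [hf]
    rw [mul_comm t x]
    ring
  have hsecval : ∀ t ∈ Ioi (0:ℝ), ∫ x in Ioi (0:ℝ), f t x =
      Real.Gamma β * (t ^ (a - β - 1) * (1 + t) ^ (b - a - 1)) := by
    intro t ht
    simp only [mem_Ioi] at ht
    have e1 : ∫ x in Ioi (0:ℝ), f t x =
        (t ^ (a - 1) * (1 + t) ^ (b - a - 1)) *
          ∫ x in Ioi (0:ℝ), x ^ (β - 1) * Real.exp (-(t * x)) := by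
      rw [← integral_const_mul]
      refine setIntegral_congr_fun measurableSet_Ioi (fun x hx => ?_)
      simp only [hf]
      rw [mul_comm t x]
      ring
    rw [e1, Real.integral_rpow_mul_exp_neg_mul_Ioi hβ ht, one_div,
      Real.inv_rpow ht.le, ← Real.rpow_neg ht.le]
    rw [show t ^ (a-1) * (1+t) ^ (b-a-1) * (t ^ (-β) * Real.Gamma β)
      = Real.Gamma β * (t ^ (a-1) * t ^ (-β) * (1+t) ^ (b-a-1)) from by ring,
      ← Real.rpow_add ht]
    ring_nf
  have hpq1 : (0:ℝ) < a - β := by linarith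
  have hpq2 : (0:ℝ) < β - b + 1 := by linarith
  have hbetaInt : IntegrableOn
      (fun t : ℝ => Real.Gamma β * (t ^ (a - β - 1) * (1 + t) ^ (b - a - 1))) (Ioi 0) := by
    have h := (integrableOn_betaIoi hpq1 hpq2).const_mul (Real.Gamma β)
    refine IntegrableOn.congr_fun h (fun t ht => ?_) measurableSet_Ioi
    rw [show -((a - β) + (β - b + 1)) = b - a - 1 from by ring,
      show a - β - 1 = a - β - 1 from rfl]
  have hint : Integrable (Function.uncurry f)
      ((volume.restrict (Ioi (0:ℝ))).prod (volume.restrict (Ioi (0:ℝ)))) := by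
    rw [integrable_prod_iff hmeas]
    constructor
    · exact (ae_restrict_iff' measurableSet_Ioi).mpr (Filter.Eventually.of_forall hsec)
    · refine Integrable.congr hbetaInt ?_
      refine ((ae_restrict_iff' measurableSet_Ioi).mpr (Filter.Eventually.of_forall ?_))
      intro t ht
      simp only [Function.uncurry_apply_pair]
      rw [← hsecval t ht]
      refine (setIntegral_congr_fun measurableSet_Ioi (fun x hx => ?_)).symm
      rw [Real.norm_eq_abs, abs_of_nonneg (hfnn t ht x hx)]
  have swap := MeasureTheory.integral_integral_swap (f := f) hint
  have lhs1 : ∫ x in Ioi (0:ℝ), x ^ (β - 1) * tricomiU a b x =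
      (1 / Real.Gamma a) * ∫ x in Ioi (0:ℝ), ∫ t in Ioi (0:ℝ), f t x := by
    rw [← integral_const_mul]
    refine setIntegral_congr_fun measurableSet_Ioi (fun x hx => ?_)
    rw [tricomiU, show (∫ t in Ioi (0:ℝ), f t x) =
      (∫ t in Ioi (0:ℝ), t ^ (a - 1) * Real.exp (-(x * t)) * (1 + t) ^ (b - a - 1)) * x ^ (β - 1)
      from integral_mul_const _ _]
    ring
  rw [lhs1, ← swap, setIntegral_congr_fun measurableSet_Ioi hsecval, integral_const_mul]
  have e2 : ∫ t in Ioi (0:ℝ), t ^ (a - β - 1) * (1 + t) ^ (b - a - 1) =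
      Real.Gamma (a - β) * Real.Gamma (β - b + 1) / Real.Gamma ((a - β) + (β - b + 1)) := by
    rw [← betaIoi hpq1 hpq2]
    refine setIntegral_congr_fun measurableSet_Ioi (fun t ht => ?_)
    rw [show -((a - β) + (β - b + 1)) = b - a - 1 from by ring,
      show (a - β) - 1 = a - β - 1 from rfl]
  rw [e2, show (a - β) + (β - b + 1) = a - b + 1 from by ring]
  have hGa : Real.Gamma a ≠ 0 := (Real.Gamma_pos_of_pos ha).ne'
  have hGab : Real.Gamma (a - b + 1) ≠ 0 := (Real.Gamma_pos_of_pos (by linarith)).ne'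
  field_simp
end

section
/- For every b > 0 and every μ with 0 < μ < 1, ∫_0^∞ x^{μ−1} Ei(−bx) dx = −(b^{−μ}/μ) Γ(μ). -/
open MeasureTheory Set

/-- `negEi x = Ei (-x)`, the exponential integral evaluated at `-x`, for `x > 0`. -/
noncomputable def negEi (x : ℝ) : ℝ := -∫ t in Ioi (1:ℝ), Real.exp (-(x * t)) / t

theorem stmt_5 (b μ : ℝ) (hb : 0 < b) (hμ0 : 0 < μ) (hμ1 : μ < 1) :
    ∫ x in Ioi (0:ℝ), x ^ (μ - 1) * negEi (b * x) =
      -(b ^ (-μ) / μ) * Real.Gamma μ := by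
  set g : ℝ → ℝ → ℝ := fun t x => x ^ (μ - 1) * (Real.exp (-(b * x * t)) / t) with hg
  -- integrability in x for fixed t > 0
  have hgint : ∀ t : ℝ, 0 < t → IntegrableOn (fun x => g t x) (Ioi 0) := by
    intro t ht
    have h1 : IntegrableOn (fun x : ℝ => x ^ (μ - 1) * Real.exp (-(b*t) * x ^ (1:ℝ))) (Ioi 0) :=
      integrableOn_rpow_mul_exp_neg_mul_rpow (by linarith) one_pos (by positivity)
    refine IntegrableOn.congr_fun (h1.mul_const (1/t)) (fun x hx => ?_) measurableSet_Ioi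
    rw [Real.rpow_one, show -(b*t)*x = -(b*x*t) by ring]
    ring
  -- value of the inner integral
  have hval : ∀ t : ℝ, 0 < t →
      ∫ x in Ioi 0, g t x = b ^ (-μ) * Real.Gamma μ * t ^ (-(μ+1)) := by
    intro t ht
    have h1 : ∫ x in Ioi 0, g t x
        = (∫ x in Ioi 0, x ^ (μ - 1) * Real.exp (-((b*t) * x))) * (1/t) := by
      rw [← integral_mul_const]
      refine setIntegral_congr_fun measurableSet_Ioi (fun x hx => ?_)
      rw [show ((b*t)*x) = b*x*t by ring]
      ring
    rw [h1, Real.integral_rpow_mul_exp_neg_mul_Ioi hμ0 (by positivity)]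
    rw [one_div (b*t), Real.inv_rpow (by positivity), ← Real.rpow_neg (by positivity),
      Real.mul_rpow hb.le ht.le, one_div t, ← Real.rpow_neg_one t,
      show (-(μ+1)) = -μ + -1 by ring, Real.rpow_add ht]
    ring
  -- nonnegativity
  have hgnn : ∀ t : ℝ, 0 < t → ∀ x : ℝ, 0 < x → 0 ≤ g t x := by
    intro t ht x hx
    have := Real.exp_pos (-(b*x*t))
    positivity
  -- product integrability
  have hmeas : AEStronglyMeasurable (Function.uncurry g)
      (((volume : Measure ℝ).restrict (Ioi 1)).prod ((volume : Measure ℝ).restrict (Ioi 0))) := by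
    apply Measurable.aestronglyMeasurable
    show Measurable fun p : ℝ × ℝ => p.2 ^ (μ - 1) * (Real.exp (-(b * p.2 * p.1)) / p.1)
    fun_prop
  have hprod : Integrable (Function.uncurry g)
      (((volume : Measure ℝ).restrict (Ioi 1)).prod ((volume : Measure ℝ).restrict (Ioi 0))) := by
    rw [integrable_prod_iff hmeas]
    constructor
    · filter_upwards [self_mem_ae_restrict (measurableSet_Ioi (a := (1:ℝ)))] with t ht
      exact hgint t (lt_trans one_pos ht)
    · have hi : IntegrableOn (fun t : ℝ => b ^ (-μ) * Real.Gamma μ * t ^ (-(μ+1))) (Ioi 1) := by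
        exact (integrableOn_Ioi_rpow_of_lt (by linarith) one_pos).const_mul _
      refine hi.congr ?_
      filter_upwards [self_mem_ae_restrict (measurableSet_Ioi (a := (1:ℝ)))] with t ht
      have ht0 : 0 < t := lt_trans one_pos ht
      have h2 : ∫ x in Ioi 0, ‖Function.uncurry g (t, x)‖ = ∫ x in Ioi 0, g t x := by
        refine setIntegral_congr_fun measurableSet_Ioi (fun x hx => ?_)
        exact Real.norm_of_nonneg (hgnn t ht0 x hx)
      rw [h2, hval t ht0]
  -- put everything together
  have hswap := integral_integral_swap hprod
  have lhs_eq : ∫ x in Ioi (0:ℝ), x ^ (μ - 1) * negEi (b * x)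
      = -∫ x in Ioi (0:ℝ), ∫ t in Ioi (1:ℝ), g t x := by
    rw [← integral_neg]
    refine setIntegral_congr_fun measurableSet_Ioi (fun x hx => ?_)
    rw [negEi, mul_neg, ← integral_const_mul]
  rw [lhs_eq, ← hswap]
  have : ∫ t in Ioi (1:ℝ), ∫ x in Ioi (0:ℝ), g t x
      = ∫ t in Ioi (1:ℝ), b ^ (-μ) * Real.Gamma μ * t ^ (-(μ+1)) := by
    refine setIntegral_congr_fun measurableSet_Ioi (fun t ht => ?_)
    exact hval t (lt_trans one_pos ht)
  rw [this, integral_const_mul, integral_Ioi_rpow_of_lt (by linarith) one_pos]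
  rw [Real.one_rpow]
  field_simp
  rw [show -(μ + 1) + 1 = -μ by ring, div_neg, div_self hμ0.ne']
end

section
/- Let ν > 0, μ > 0 and β > 0. Then ∫_0^∞ x^{ν−1} e^{−μx} Ei(−βx) dx = −(Γ(ν)/(ν (β+μ)^ν)) · Σ_{n=0}^∞ [ (1)_n (ν)_n / ((ν+1)_n n!) ] (μ/(β+μ))^n. -/
open MeasureTheory Set

/-- The Pochhammer symbol `(q)ₙ = q (q+1) ⋯ (q+n-1)`. -/
noncomputable def poch (q : ℝ) (n : ℕ) : ℝ := ∏ i ∈ Finset.range n, (q + (i : ℝ))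

lemma poch_one_eq (n : ℕ) : poch 1 n = n.factorial := by
  induction n with
  | zero => simp [poch]
  | succ n ih =>
    rw [poch, Finset.prod_range_succ, ← poch, ih]
    push_cast [Nat.factorial_succ]
    ring

lemma poch_pos {q : ℝ} (hq : 0 < q) (n : ℕ) : 0 < poch q n :=
  Finset.prod_pos fun i _ => by positivity

lemma poch_mul (ν : ℝ) (n : ℕ) : ν * poch (ν + 1) n = poch ν n * (ν + n) := by
  have h2 : poch ν (n + 1) = ν * poch (ν + 1) n := by
    rw [poch, Finset.prod_range_succ', poch]
    simp only [Nat.cast_zero, add_zero, Nat.cast_add, Nat.cast_one]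
    rw [mul_comm]
    congr 1
    exact Finset.prod_congr rfl fun i _ => by push_cast; ring
  rw [← h2, poch, Finset.prod_range_succ, ← poch]

lemma coeff_eq {ν : ℝ} (hν : 0 < ν) (n : ℕ) :
    poch 1 n * poch ν n / (poch (ν + 1) n * (n.factorial : ℝ)) = ν / (ν + n) := by
  have hp := poch_pos hν n
  have hp1 := poch_pos (by linarith : (0:ℝ) < ν + 1) n
  have hn : (0:ℝ) < ν + n := by positivity
  have hfac : (0:ℝ) < (n.factorial : ℝ) := by positivity
  rw [poch_one_eq, div_eq_div_iff (by positivity) (by positivity)]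
  have := poch_mul ν n
  nlinarith [this]

open Real Filter Topology in
lemma integrableOn_aux {μ β r : ℝ} (hμ : 0 < μ) (hβ : 0 < β) (hr : 0 < r) :
    IntegrableOn (fun t : ℝ => (μ + β * t) ^ (-(r + 1))) (Ioi (1:ℝ)) := by
  have hmeas : Measurable fun t : ℝ => (μ + β * t) ^ (-(r + 1)) := by fun_prop
  refine Integrable.mono
    (g := fun t : ℝ => β ^ (-(r + 1)) * t ^ (-(r + 1))) ?_ hmeas.aestronglyMeasurable ?_
  · exact ((integrableOn_Ioi_rpow_of_lt (by linarith) one_pos).const_mul _)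
  · refine (ae_restrict_iff' measurableSet_Ioi).2 (Filter.Eventually.of_forall fun t ht => ?_)
    have ht1 : (1:ℝ) < t := ht
    have h1 : (0:ℝ) < β * t := by nlinarith
    have h2 : (0:ℝ) < μ + β * t := by nlinarith
    rw [Real.norm_eq_abs, Real.norm_eq_abs, abs_of_nonneg (Real.rpow_nonneg h2.le _),
      abs_of_nonneg (by positivity)]
    calc (μ + β * t) ^ (-(r + 1)) ≤ (β * t) ^ (-(r + 1)) :=
          Real.rpow_le_rpow_of_nonpos h1 (by linarith) (by linarith)
      _ = β ^ (-(r + 1)) * t ^ (-(r + 1)) :=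
          Real.mul_rpow hβ.le (by linarith)

open Real Filter Topology in
lemma integral_aux {μ β r : ℝ} (hμ : 0 < μ) (hβ : 0 < β) (hr : 0 < r) :
    ∫ t in Ioi (1:ℝ), (μ + β * t) ^ (-(r + 1)) = (μ + β) ^ (-r) / (β * r) := by
  have hβr : β * r ≠ 0 := by positivity
  have hderiv : ∀ x ∈ Ici (1:ℝ), HasDerivAt
      (fun t : ℝ => -(μ + β * t) ^ (-r) / (β * r)) ((μ + β * x) ^ (-(r + 1))) x := by
    intro x hx
    have hx1 : (1:ℝ) ≤ x := hx
    have hpos : (0:ℝ) < μ + β * x := by nlinarith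
    have h1 : HasDerivAt (fun t : ℝ => μ + β * t) β x := by
      simpa using ((hasDerivAt_id x).const_mul β).const_add μ
    have h2 := (h1.rpow_const (p := -r) (Or.inl hpos.ne')).neg.div_const (β * r)
    refine h2.congr_deriv ?_
    rw [show -(r + 1) = -r + (-1) by ring, show -r - 1 = -r + (-1) by ring,
      Real.rpow_add hpos, Real.rpow_neg_one]
    field_simp
  have htend : Tendsto (fun t : ℝ => -(μ + β * t) ^ (-r) / (β * r)) atTop (𝓝 0) := by
    have h1 : Tendsto (fun t : ℝ => μ + β * t) atTop atTop :=
      tendsto_atTop_add_const_left _ _ (tendsto_id.const_mul_atTop hβ)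
    have h2 := (tendsto_rpow_neg_atTop hr).comp h1
    have h3 := (h2.neg.div_const (β * r))
    simpa using h3
  have := integral_Ioi_of_hasDerivAt_of_tendsto
    (f := fun t : ℝ => -(μ + β * t) ^ (-r) / (β * r))
    (f' := fun t : ℝ => (μ + β * t) ^ (-(r + 1)))
    (hderiv 1 (by norm_num)).continuousAt.continuousWithinAt
    (fun x hx => hderiv x (mem_Ici.mpr (le_of_lt hx)))
    (integrableOn_aux hμ hβ hr) htend
  rw [this]
  ring

open Real in
lemma expand_aux {μ β ν t : ℝ} (hμ : 0 < μ) (hβ : 0 < β) (hν : 0 < ν) (ht : 1 < t) :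
    (1 / (μ + β * t)) ^ ν * Real.Gamma ν / t
      = ∑' n : ℕ, (Real.Gamma ν * β * μ ^ n) * (μ + β * t) ^ (-(ν + (n:ℝ) + 1)) := by
  have hc : 0 < μ + β * t := by nlinarith
  have hz1 : μ / (μ + β * t) < 1 := by rw [div_lt_one hc]; nlinarith
  have hz0 : 0 ≤ μ / (μ + β * t) := by positivity
  have hterm : ∀ n : ℕ, (Real.Gamma ν * β * μ ^ n) * (μ + β * t) ^ (-(ν + (n:ℝ) + 1))
      = (Real.Gamma ν * β * (μ + β * t) ^ (-(ν + 1))) * (μ / (μ + β * t)) ^ n := by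
    intro n
    rw [show -(ν + (n:ℝ) + 1) = -(ν + 1) + -(n:ℝ) by ring, Real.rpow_add hc,
      Real.rpow_neg hc.le ((n:ℝ)), Real.rpow_natCast, div_pow, ← inv_pow]
    field_simp
    rw [← mul_pow, one_div_mul_cancel hc.ne', one_pow]
  rw [tsum_congr hterm, tsum_mul_left, tsum_geometric_of_lt_one hz0 hz1]
  have h1 : (1 : ℝ) - μ / (μ + β * t) = β * t / (μ + β * t) := by field_simp; ring
  rw [h1, one_div, Real.inv_rpow hc.le, ← Real.rpow_neg hc.le,
    show -(ν + 1) = -ν + (-1) by ring, Real.rpow_add hc, Real.rpow_neg_one]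
  rw [inv_div]
  field_simp

open Real in
lemma term_eq {μ β ν t : ℝ} (hc : 0 < μ + β * t) (n : ℕ) :
    (Real.Gamma ν * β * μ ^ n) * (μ + β * t) ^ (-(ν + (n:ℝ) + 1))
      = (Real.Gamma ν * β * (μ + β * t) ^ (-(ν + 1))) * (μ / (μ + β * t)) ^ n := by
  rw [show -(ν + (n:ℝ) + 1) = -(ν + 1) + -(n:ℝ) by ring, Real.rpow_add hc,
    Real.rpow_neg hc.le ((n:ℝ)), Real.rpow_natCast, div_pow, ← inv_pow]
  field_simp
  rw [mul_assoc, ← mul_pow, one_div_mul_cancel hc.ne', one_pow, mul_one]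

open Real in
lemma summable_term {μ β ν t : ℝ} (hμ : 0 < μ) (hβ : 0 < β) (ht : 1 < t) :
    Summable fun n : ℕ =>
      (Real.Gamma ν * β * μ ^ n) * (μ + β * t) ^ (-(ν + (n:ℝ) + 1)) := by
  have hc : 0 < μ + β * t := by nlinarith
  have hz1 : μ / (μ + β * t) < 1 := by rw [div_lt_one hc]; nlinarith
  have hz0 : 0 ≤ μ / (μ + β * t) := by positivity
  exact ((summable_geometric_of_lt_one hz0 hz1).mul_left _).congr
    fun n => (term_eq hc n).symm

open Real in
lemma gammaInt_aux {ν r : ℝ} (hν : 0 < ν) (hr : 0 < r) :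
    IntegrableOn (fun x : ℝ => x ^ (ν - 1) * Real.exp (-(r * x))) (Ioi (0:ℝ)) := by
  have h := integrableOn_rpow_mul_exp_neg_mul_rpow (p := 1) (s := ν - 1) (b := r)
    (by linarith) one_pos hr
  refine h.congr_fun (fun x hx => ?_) measurableSet_Ioi
  simp only [Real.rpow_one, pow_one]
  ring_nf

lemma summable_aux {ν z : ℝ} (hν : 0 < ν) (hz0 : 0 ≤ z) (hz1 : z < 1) :
    Summable fun n : ℕ => z ^ n / (ν + (n:ℝ)) := by
  refine Summable.of_nonneg_of_le (fun n => by positivity) (fun n => ?_)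
    ((summable_geometric_of_lt_one hz0 hz1).mul_left (1/ν))
  have h1 : z ^ n / (ν + (n:ℝ)) ≤ z ^ n / ν :=
    div_le_div_of_nonneg_left (by positivity) hν (by simp)
  calc z ^ n / (ν + (n:ℝ)) ≤ z ^ n / ν := h1
    _ = 1 / ν * z ^ n := by ring

open Real Filter Topology in
theorem stmt_6 (ν μ β : ℝ) (hν : 0 < ν) (hμ : 0 < μ) (hβ : 0 < β) :
    ∫ x in Ioi (0:ℝ), x ^ (ν - 1) * Real.exp (-(μ * x)) * negEi (β * x) =
      -(Real.Gamma ν / (ν * (β + μ) ^ ν)) *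
        ∑' n : ℕ, (poch 1 n * poch ν n / (poch (ν + 1) n * (n.factorial : ℝ))) *
          (μ / (β + μ)) ^ n := by
  have hB : (0:ℝ) < β + μ := by linarith
  have hΓ : 0 < Real.Gamma ν := Real.Gamma_pos_of_pos hν
  set z : ℝ := μ / (β + μ) with hzdef
  have hz0 : 0 ≤ z := by positivity
  have hz1 : z < 1 := by rw [hzdef, div_lt_one hB]; linarith
  set S : ℝ := ∑' n : ℕ, z ^ n / (ν + (n:ℝ)) with hSdef
  have hsum : Summable fun n : ℕ => z ^ n / (ν + (n:ℝ)) := summable_aux hν hz0 hz1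
  have hS0 : 0 ≤ S := tsum_nonneg fun n => by positivity
  -- RHS simplification
  have hRHS : -(Real.Gamma ν / (ν * (β + μ) ^ ν)) *
        ∑' n : ℕ, (poch 1 n * poch ν n / (poch (ν + 1) n * (n.factorial : ℝ))) * z ^ n
      = -(Real.Gamma ν * (β + μ) ^ (-ν) * S) := by
    have h1 : ∀ n : ℕ, (poch 1 n * poch ν n / (poch (ν + 1) n * (n.factorial : ℝ))) * z ^ n
        = ν * (z ^ n / (ν + (n:ℝ))) := by
      intro n
      rw [coeff_eq hν n]
      have hn : (0:ℝ) < ν + n := by positivity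
      field_simp
    rw [tsum_congr h1, tsum_mul_left, ← hSdef, Real.rpow_neg hB.le]
    have hBν : (0:ℝ) < (β + μ) ^ ν := Real.rpow_pos_of_pos hB ν
    field_simp
  rw [hRHS]
  -- definitions
  set G : ℝ → ℝ := fun x => ∫ t in Ioi (1:ℝ), Real.exp (-(β * x * t)) / t with hGdef
  have hL1 : ∫ x in Ioi (0:ℝ), x ^ (ν - 1) * Real.exp (-(μ * x)) * negEi (β * x)
      = -∫ x in Ioi (0:ℝ), x ^ (ν - 1) * Real.exp (-(μ * x)) * G x := by
    rw [← integral_neg]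
    refine setIntegral_congr_fun measurableSet_Ioi fun x hx => ?_
    simp only [negEi, hGdef, mul_neg]
  rw [hL1, neg_inj]
  -- inner integrability
  have hGint : ∀ x : ℝ, 0 < x →
      IntegrableOn (fun t : ℝ => Real.exp (-(β * x * t)) / t) (Ioi (1:ℝ)) := by
    intro x hx
    have hbx : 0 < β * x := by positivity
    refine Integrable.mono (exp_neg_integrableOn_Ioi 1 hbx)
      ((by fun_prop : Measurable fun t : ℝ => Real.exp (-(β * x * t)) / t).aestronglyMeasurable) ?_
    refine (ae_restrict_iff' measurableSet_Ioi).2 (Filter.Eventually.of_forall fun t ht => ?_)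
    have ht1 : (1:ℝ) < t := ht
    rw [Real.norm_eq_abs, Real.norm_eq_abs,
      abs_of_nonneg (div_nonneg (Real.exp_pos _).le (by linarith)),
      abs_of_nonneg (Real.exp_pos _).le]
    have h2 : Real.exp (-(β * x * t)) / t ≤ Real.exp (-(β * x * t)) :=
      div_le_self (Real.exp_pos _).le ht1.le
    calc Real.exp (-(β * x * t)) / t ≤ Real.exp (-(β * x * t)) := h2
      _ = Real.exp (-(β * x) * t) := by ring_nf
  have hGnn : ∀ x : ℝ, 0 ≤ G x := fun x =>
    setIntegral_nonneg measurableSet_Ioi fun t ht =>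
      div_nonneg (Real.exp_pos _).le (by linarith [mem_Ioi.mp ht])
  -- measurability
  have hfm : AEStronglyMeasurable (fun x : ℝ => x ^ (ν - 1) * Real.exp (-(μ * x)) * G x)
      (volume.restrict (Ioi (0:ℝ))) := by
    have hG : StronglyMeasurable G := by
      have hm : StronglyMeasurable fun p : ℝ × ℝ => Real.exp (-(β * p.1 * p.2)) / p.2 :=
        (by fun_prop : Measurable fun p : ℝ × ℝ => Real.exp (-(β * p.1 * p.2)) / p.2).stronglyMeasurable
      exact hm.integral_prod_right'
    exact (((by fun_prop : Measurable fun x : ℝ =>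
      x ^ (ν - 1) * Real.exp (-(μ * x))).stronglyMeasurable.mul hG)).aestronglyMeasurable
  have hnn : 0 ≤ᵐ[volume.restrict (Ioi (0:ℝ))]
      fun x : ℝ => x ^ (ν - 1) * Real.exp (-(μ * x)) * G x := by
    refine (ae_restrict_iff' measurableSet_Ioi).2 (Filter.Eventually.of_forall fun x hx => ?_)
    have hx0 : (0:ℝ) < x := hx
    exact mul_nonneg (mul_nonneg (Real.rpow_nonneg hx0.le _) (Real.exp_pos _).le) (hGnn x)
  rw [integral_eq_lintegral_of_nonneg_ae hnn hfm]
  -- lintegral computation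
  have hlin : ∫⁻ x in Ioi (0:ℝ), ENNReal.ofReal (x ^ (ν - 1) * Real.exp (-(μ * x)) * G x)
      = ENNReal.ofReal (Real.Gamma ν * (β + μ) ^ (-ν) * S) := by
    have hmeasF : Measurable fun p : ℝ × ℝ => ENNReal.ofReal
        (p.1 ^ (ν - 1) * Real.exp (-(μ * p.1)) * (Real.exp (-(β * p.1 * p.2)) / p.2)) := by
      fun_prop
    have step2 : ∫⁻ x in Ioi (0:ℝ), ENNReal.ofReal (x ^ (ν - 1) * Real.exp (-(μ * x)) * G x)
        = ∫⁻ x in Ioi (0:ℝ), ∫⁻ t in Ioi (1:ℝ),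
            ENNReal.ofReal (x ^ (ν - 1) * Real.exp (-(μ * x)) * (Real.exp (-(β * x * t)) / t)) := by
      refine setLIntegral_congr_fun measurableSet_Ioi (fun x hx => ?_)
      have hx0 : (0:ℝ) < x := hx
      have hc : 0 ≤ x ^ (ν - 1) * Real.exp (-(μ * x)) :=
        mul_nonneg (Real.rpow_nonneg hx0.le _) (Real.exp_pos _).le
      have h1 : x ^ (ν - 1) * Real.exp (-(μ * x)) * G x
          = ∫ t in Ioi (1:ℝ), x ^ (ν - 1) * Real.exp (-(μ * x)) * (Real.exp (-(β * x * t)) / t) :=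
        (integral_const_mul _ _).symm
      rw [h1, ofReal_integral_eq_lintegral_ofReal ((hGint x hx0).const_mul _)
        ((ae_restrict_iff' measurableSet_Ioi).2 (Filter.Eventually.of_forall fun t ht =>
          mul_nonneg hc (div_nonneg (Real.exp_pos _).le (by linarith [mem_Ioi.mp ht]))))]
    have step3 : (∫⁻ x in Ioi (0:ℝ), ∫⁻ t in Ioi (1:ℝ),
            ENNReal.ofReal (x ^ (ν - 1) * Real.exp (-(μ * x)) * (Real.exp (-(β * x * t)) / t)))
        = ∫⁻ t in Ioi (1:ℝ), ∫⁻ x in Ioi (0:ℝ),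
            ENNReal.ofReal (x ^ (ν - 1) * Real.exp (-(μ * x)) * (Real.exp (-(β * x * t)) / t)) :=
      lintegral_lintegral_swap hmeasF.aemeasurable
    have step4 : ∀ t : ℝ, t ∈ Ioi (1:ℝ) →
        (∫⁻ x in Ioi (0:ℝ),
            ENNReal.ofReal (x ^ (ν - 1) * Real.exp (-(μ * x)) * (Real.exp (-(β * x * t)) / t)))
          = ENNReal.ofReal ((1 / (μ + β * t)) ^ ν * Real.Gamma ν / t) := by
      intro t ht
      have ht1 : (1:ℝ) < t := ht
      have ht0 : (0:ℝ) < t := by linarith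
      have hc : 0 < μ + β * t := by nlinarith
      have heq : ∀ x : ℝ, x ^ (ν - 1) * Real.exp (-(μ * x)) * (Real.exp (-(β * x * t)) / t)
          = (1 / t) * (x ^ (ν - 1) * Real.exp (-((μ + β * t) * x))) := by
        intro x
        rw [show -((μ + β * t) * x) = -(μ * x) + -(β * x * t) by ring, Real.exp_add]
        field_simp
      simp_rw [heq, ENNReal.ofReal_mul (by positivity : (0:ℝ) ≤ 1 / t)]
      rw [lintegral_const_mul' _ _ ENNReal.ofReal_ne_top,
        ← ofReal_integral_eq_lintegral_ofReal (gammaInt_aux hν hc)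
          ((ae_restrict_iff' measurableSet_Ioi).2 (Filter.Eventually.of_forall fun x hx =>
            mul_nonneg (Real.rpow_nonneg (le_of_lt hx) _) (Real.exp_pos _).le)),
        Real.integral_rpow_mul_exp_neg_mul_Ioi hν hc,
        ← ENNReal.ofReal_mul (by positivity : (0:ℝ) ≤ 1 / t)]
      congr 1
      ring
    have step5 : ∀ t : ℝ, t ∈ Ioi (1:ℝ) →
        ENNReal.ofReal ((1 / (μ + β * t)) ^ ν * Real.Gamma ν / t)
          = ∑' n : ℕ, ENNReal.ofReal
              ((Real.Gamma ν * β * μ ^ n) * (μ + β * t) ^ (-(ν + (n:ℝ) + 1))) := by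
      intro t ht
      have ht1 : (1:ℝ) < t := ht
      have hc : 0 < μ + β * t := by nlinarith
      rw [expand_aux hμ hβ hν ht1]
      exact ENNReal.ofReal_tsum_of_nonneg
        (fun n => mul_nonneg (by positivity) (Real.rpow_nonneg hc.le _))
        (summable_term hμ hβ ht1)
    have step7 : ∀ n : ℕ,
        (∫⁻ t in Ioi (1:ℝ), ENNReal.ofReal
            ((Real.Gamma ν * β * μ ^ n) * (μ + β * t) ^ (-(ν + (n:ℝ) + 1))))
          = ENNReal.ofReal ((Real.Gamma ν * (β + μ) ^ (-ν)) * (z ^ n / (ν + (n:ℝ)))) := by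
      intro n
      have hr : (0:ℝ) < ν + n := by positivity
      rw [← ofReal_integral_eq_lintegral_ofReal ((integrableOn_aux hμ hβ hr).const_mul _)
        ((ae_restrict_iff' measurableSet_Ioi).2 (Filter.Eventually.of_forall fun t ht => by
          have hc : (0:ℝ) < μ + β * t := by nlinarith [mem_Ioi.mp ht]
          exact mul_nonneg (by positivity) (Real.rpow_nonneg hc.le _)))]
      rw [integral_const_mul, integral_aux hμ hβ hr]
      congr 1
      have hμβ : μ + β = β + μ := add_comm μ β
      rw [hμβ, show -(ν + (n:ℝ)) = -ν + -(n:ℝ) by ring, Real.rpow_add hB,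
        Real.rpow_neg hB.le ((n:ℝ)), Real.rpow_natCast, hzdef, div_pow]
      have h1 : ((β + μ) ^ n : ℝ) ≠ 0 := by positivity
      field_simp
    rw [step2, step3, setLIntegral_congr_fun measurableSet_Ioi step4,
      setLIntegral_congr_fun measurableSet_Ioi step5,
      lintegral_tsum (fun n => Measurable.aemeasurable (by fun_prop)), tsum_congr step7,
      ← ENNReal.ofReal_tsum_of_nonneg (fun n => by positivity) (hsum.mul_left _), tsum_mul_left,
      ← hSdef]
  rw [hlin, ENNReal.toReal_ofReal (by positivity)]
end

section
/- For all a > 0 and b > 0, ∫_0^∞ Ei(−a x) cos(b x) dx = −(1/b) arctan(b/a). -/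
open MeasureTheory Set Real Filter

lemma aux_exp_int (c : ℝ) (hc : 0 < c) :
    ∫ x in Ioi (0:ℝ), Real.exp (-c * x) = 1 / c := by
  have := MeasureTheory.integral_comp_mul_left_Ioi (fun u => Real.exp (-u)) 0 hc
  simp only [mul_zero, integral_exp_neg_Ioi, neg_zero, Real.exp_zero, smul_eq_mul, mul_one] at this
  simp_rw [neg_mul]
  rw [this]
  rw [one_div]

lemma aux_integral_exp_cos (c b : ℝ) (hc : 0 < c) :
    ∫ x in Ioi (0:ℝ), Real.exp (-(c * x)) * Real.cos (b * x) = c / (c ^ 2 + b ^ 2) := by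
  have hD : (0:ℝ) < c ^ 2 + b ^ 2 := by positivity
  set F : ℝ → ℝ := fun x =>
    Real.exp (-(c * x)) * (b * Real.sin (b * x) - c * Real.cos (b * x)) / (c ^ 2 + b ^ 2) with hF
  have hderiv : ∀ x : ℝ, HasDerivAt F (Real.exp (-(c * x)) * Real.cos (b * x)) x := by
    intro x
    have h1 : HasDerivAt (fun x => Real.exp (-(c * x))) (Real.exp (-(c * x)) * (-c)) x := by
      have := (Real.hasDerivAt_exp (-(c * x))).comp x
        (((hasDerivAt_id x).const_mul c).neg)
      simpa [Function.comp_def] using this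
    have h2 : HasDerivAt (fun x => b * Real.sin (b * x) - c * Real.cos (b * x))
        (b * (Real.cos (b * x) * b) - c * (-Real.sin (b * x) * b)) x := by
      have hs : HasDerivAt (fun x => Real.sin (b * x)) (Real.cos (b * x) * b) x :=
        (Real.hasDerivAt_sin (b * x)).comp x (by simpa using ((hasDerivAt_id x).const_mul b))
      have hcc : HasDerivAt (fun x => Real.cos (b * x)) (-Real.sin (b * x) * b) x :=
        (Real.hasDerivAt_cos (b * x)).comp x (by simpa using ((hasDerivAt_id x).const_mul b))
      exact (hs.const_mul b).sub (hcc.const_mul c)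
    have := ((h1.mul h2).div_const (c ^ 2 + b ^ 2))
    convert this using 1
    case e'_4 => rfl
    case e'_5 => rfl
    case e'_8 => rfl
    field_simp
    ring
  have hint : IntegrableOn (fun x => Real.exp (-(c * x)) * Real.cos (b * x)) (Ioi (0:ℝ)) := by
    have hbase : IntegrableOn (fun x => Real.exp (-c * x)) (Ioi (0:ℝ)) :=
      exp_neg_integrableOn_Ioi 0 hc
    refine hbase.mono' ?_ ?_
    · exact (Continuous.aestronglyMeasurable (by continuity))
    · filter_upwards with x
      rw [norm_mul]
      calc ‖Real.exp (-(c * x))‖ * ‖Real.cos (b * x)‖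
          ≤ ‖Real.exp (-(c * x))‖ * 1 := by
            gcongr; exact abs_le.mpr ⟨Real.neg_one_le_cos _, Real.cos_le_one _⟩
        _ = Real.exp (-c * x) := by rw [mul_one, Real.norm_eq_abs, abs_of_pos (Real.exp_pos _)]; ring_nf
  have htend : Tendsto F atTop (nhds 0) := by
    have h0 : Tendsto (fun x : ℝ => Real.exp (-c * x) * ((|b| + |c|) / (c ^ 2 + b ^ 2)))
        atTop (nhds 0) := by
      have : Tendsto (fun x : ℝ => Real.exp (-c * x)) atTop (nhds 0) :=
        Real.tendsto_exp_atBot.comp (tendsto_id.const_mul_atTop_of_neg (neg_neg_iff_pos.mpr hc))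
      simpa using this.mul_const ((|b| + |c|) / (c ^ 2 + b ^ 2))
    refine squeeze_zero_norm (fun x => ?_) h0
    · rw [hF]
      simp only [norm_div, norm_mul, Real.norm_eq_abs]
      rw [abs_of_pos hD, abs_of_pos (Real.exp_pos _), div_le_iff₀ hD]
      have : |b * Real.sin (b * x) - c * Real.cos (b * x)| ≤ |b| + |c| := by
        calc |b * Real.sin (b * x) - c * Real.cos (b * x)|
            ≤ |b * Real.sin (b * x)| + |c * Real.cos (b * x)| := abs_sub _ _
          _ ≤ |b| * 1 + |c| * 1 := by
              rw [abs_mul, abs_mul]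
              gcongr
              · exact abs_sin_le_one _
              · exact abs_cos_le_one _
          _ = |b| + |c| := by ring
      calc Real.exp (-(c * x)) * |b * Real.sin (b * x) - c * Real.cos (b * x)|
          ≤ Real.exp (-(c * x)) * (|b| + |c|) := by gcongr
        _ = Real.exp (-c * x) * ((|b| + |c|) / (c ^ 2 + b ^ 2)) * (c ^ 2 + b ^ 2) := by
            field_simp
  have := integral_Ioi_of_hasDerivAt_of_tendsto
      (f := F) (f' := fun x => Real.exp (-(c * x)) * Real.cos (b * x)) (a := 0)
      (hderiv 0).continuousAt.continuousWithinAt (fun x _ => hderiv x) hint htend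
  rw [this, hF]
  simp
  field_simp

lemma aux_integral_rat (a b : ℝ) (ha : 0 < a) (hb : 0 < b) :
    ∫ t in Ioi (1:ℝ), a / (a ^ 2 * t ^ 2 + b ^ 2) = (1 / b) * Real.arctan (b / a) := by
  set F : ℝ → ℝ := fun t => (1 / b) * Real.arctan (a * t / b) with hF
  have hderiv : ∀ t : ℝ, HasDerivAt F (a / (a ^ 2 * t ^ 2 + b ^ 2)) t := by
    intro t
    have h1 : HasDerivAt (fun t : ℝ => a * t / b) (a / b) t := by
      simpa using ((hasDerivAt_id t).const_mul a).div_const b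
    have h2 := (Real.hasDerivAt_arctan (a * t / b)).comp t h1
    have := h2.const_mul (1 / b)
    convert this using 1
    have hD : (0:ℝ) < a ^ 2 * t ^ 2 + b ^ 2 := by positivity
    case e'_4 => rfl
    case e'_5 => rfl
    case e'_8 => rfl
    field_simp
    ring
  have htend : Tendsto F atTop (nhds ((1 / b) * (Real.pi / 2))) := by
    apply Tendsto.const_mul
    have h1 : Tendsto (fun t : ℝ => a * t / b) atTop atTop := by
      apply Tendsto.atTop_div_const hb
      exact tendsto_id.const_mul_atTop ha
    exact (Real.tendsto_arctan_atTop.mono_right nhdsWithin_le_nhds).comp h1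
  have := integral_Ioi_of_hasDerivAt_of_nonneg
      (g := F) (g' := fun t => a / (a ^ 2 * t ^ 2 + b ^ 2)) (a := 1)
      (hderiv 1).continuousAt.continuousWithinAt (fun t _ => hderiv t)
      (fun t _ => by positivity) htend
  rw [this, hF]
  have harc : Real.arctan (b / a) = Real.pi / 2 - Real.arctan (a / b) := by
    rw [show b / a = (a / b)⁻¹ by rw [inv_div], Real.arctan_inv_of_pos (by positivity)]
  rw [harc]
  simp
  ring

theorem stmt_7 (a b : ℝ) (ha : 0 < a) (hb : 0 < b) :
    ∫ x in Ioi (0:ℝ), negEi (a * x) * Real.cos (b * x) =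
      -(1 / b) * Real.arctan (b / a) := by
  set f : ℝ × ℝ → ℝ := fun p => Real.exp (-(a * p.1 * p.2)) / p.2 * Real.cos (b * p.1) with hf
  have hfmeas : AEStronglyMeasurable f
      ((volume.restrict (Ioi (0:ℝ))).prod (volume.restrict (Ioi (1:ℝ)))) := by
    apply Measurable.aestronglyMeasurable
    apply Measurable.mul
    · exact (Real.measurable_exp.comp (by measurability)).div measurable_snd
    · exact Real.measurable_cos.comp (measurable_fst.const_mul b)
  -- integrability on the product
  have hint : Integrable f
      ((volume.restrict (Ioi (0:ℝ))).prod (volume.restrict (Ioi (1:ℝ)))) := by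
    rw [integrable_prod_iff' hfmeas]
    constructor
    · rw [ae_restrict_iff' measurableSet_Ioi]
      filter_upwards with t ht
      have ht1 : (1:ℝ) < t := ht
      have ht0 : (0:ℝ) < t := lt_trans one_pos ht1
      have hbase : IntegrableOn (fun x => Real.exp (-(a * t) * x)) (Ioi (0:ℝ)) :=
        exp_neg_integrableOn_Ioi 0 (by positivity)
      refine hbase.mono' ?_ ?_
      · exact Continuous.aestronglyMeasurable (by
          apply Continuous.mul
          · exact (Real.continuous_exp.comp (by continuity)).div_const t
          · continuity)
      · filter_upwards with x
        rw [hf]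
        simp only [norm_mul, norm_div, Real.norm_eq_abs]
        rw [abs_of_pos (Real.exp_pos _), abs_of_pos ht0]
        calc Real.exp (-(a * x * t)) / t * |Real.cos (b * x)|
            ≤ Real.exp (-(a * x * t)) / 1 * 1 := by
              gcongr <;> first
                | exact (Real.exp_pos _).le
                | exact ht1.le
                | exact Real.abs_cos_le_one _
          _ = Real.exp (-(a * t) * x) := by rw [div_one, mul_one]; ring_nf
    · have hbase : IntegrableOn (fun t : ℝ => (1 / a) * t ^ (-2 : ℝ)) (Ioi (1:ℝ)) :=
        (integrableOn_Ioi_rpow_of_lt (by norm_num) one_pos).const_mul (1 / a)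
      refine hbase.mono' (hfmeas.norm.prod_swap.integral_prod_right') ?_
      rw [ae_restrict_iff' measurableSet_Ioi]
      filter_upwards with t ht
      have ht1 : (1:ℝ) < t := ht
      have ht0 : (0:ℝ) < t := lt_trans one_pos ht1
      rw [Real.norm_eq_abs, abs_of_nonneg (integral_nonneg fun x => norm_nonneg _)]
      have hbound : ∀ x : ℝ, ‖f (x, t)‖ ≤ Real.exp (-(a * t) * x) / t ^ 2 * t := by
        intro x
        rw [hf]
        simp only [norm_mul, norm_div, Real.norm_eq_abs]
        rw [abs_of_pos (Real.exp_pos _), abs_of_pos ht0]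
        have : Real.exp (-(a * t) * x) / t ^ 2 * t = Real.exp (-(a * x * t)) / t := by
          field_simp
        rw [this]
        calc Real.exp (-(a * x * t)) / t * |Real.cos (b * x)|
            ≤ Real.exp (-(a * x * t)) / t * 1 := by
              gcongr <;> first
                | positivity
                | exact Real.abs_cos_le_one _
          _ = _ := mul_one _
      calc ∫ x in Ioi (0:ℝ), ‖f (x, t)‖
          ≤ ∫ x in Ioi (0:ℝ), Real.exp (-(a * t) * x) / t ^ 2 * t := by
            apply integral_mono_of_nonneg
            · filter_upwards with x using norm_nonneg _
            · exact ((exp_neg_integrableOn_Ioi 0 (by positivity : (0:ℝ) < a * t)).div_const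
                (t ^ 2)).mul_const t
            · filter_upwards with x using hbound x
        _ = (∫ x in Ioi (0:ℝ), Real.exp (-(a * t) * x)) / t ^ 2 * t := by
            rw [integral_mul_const, integral_div]
        _ = 1 / (a * t) / t ^ 2 * t := by
            rw [aux_exp_int (a * t) (by positivity)]
        _ = (1 / a) * t ^ (-2 : ℝ) := by
            rw [Real.rpow_neg ht0.le, Real.rpow_two]
            field_simp
  -- rewrite the integrand
  have step1 : ∫ x in Ioi (0:ℝ), negEi (a * x) * Real.cos (b * x)
      = -∫ x in Ioi (0:ℝ), ∫ t in Ioi (1:ℝ), f (x, t) := by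
    rw [← integral_neg]
    apply integral_congr_ae
    filter_upwards with x
    rw [negEi, hf]
    simp only [neg_mul, neg_neg, neg_inj]
    rw [← integral_mul_const]
  rw [step1, integral_integral_swap hint]
  have step2 : ∫ t in Ioi (1:ℝ), ∫ x in Ioi (0:ℝ), f (x, t)
      = ∫ t in Ioi (1:ℝ), a / (a ^ 2 * t ^ 2 + b ^ 2) := by
    apply setIntegral_congr_fun measurableSet_Ioi
    intro t ht
    have ht1 : (1:ℝ) < t := ht
    have ht0 : (0:ℝ) < t := lt_trans one_pos ht1
    have : ∀ x : ℝ, f (x, t) = (Real.exp (-((a * t) * x)) * Real.cos (b * x)) / t := by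
      intro x; rw [hf]; simp only; rw [div_mul_eq_mul_div]; ring_nf
    simp_rw [this]
    rw [integral_div, aux_integral_exp_cos (a * t) b (by positivity)]
    have hD : ((a * t) ^ 2 + b ^ 2) ≠ 0 := by positivity
    have hD2 : (a ^ 2 * t ^ 2 + b ^ 2) ≠ 0 := by positivity
    field_simp
  rw [step2, aux_integral_rat a b ha hb]
  ring
end

section
/- For every z > 0, ∫_0^∞ Ei(−x) J₀(2√(z x)) dx = (e^{−z} − 1)/z. -/
open MeasureTheory Set

/-- The Bessel function of the first kind of order zero. -/
noncomputable def besselJ0 (y : ℝ) : ℝ :=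
  ∑' n : ℕ, (-1) ^ n * (y / 2) ^ (2 * n) / ((n.factorial : ℝ)) ^ 2

open Filter Topology

noncomputable def S (c x : ℝ) : ℝ := ∑' n : ℕ, c ^ n * x ^ n / ((n.factorial : ℝ)) ^ 2

lemma term_abs (c x : ℝ) (n : ℕ) :
    |c ^ n * x ^ n / ((n.factorial : ℝ)) ^ 2| = |c * x| ^ n / ((n.factorial : ℝ)) ^ 2 := by
  rw [abs_div, ← mul_pow, ← abs_pow, abs_of_nonneg (by positivity : (0:ℝ) ≤ ((n.factorial : ℝ))^2)]

lemma summable_abs_S (c x : ℝ) :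
    Summable (fun n : ℕ => |c * x| ^ n / ((n.factorial : ℝ)) ^ 2) := by
  refine Summable.of_nonneg_of_le (fun n => by positivity) (fun n => ?_)
    (Real.summable_pow_div_factorial |c * x|)
  have h1 : (1:ℝ) ≤ (n.factorial : ℝ) := by exact_mod_cast n.factorial_pos
  exact div_le_div_of_nonneg_left (by positivity) (by positivity) (by nlinarith)

lemma summable_S (c x : ℝ) :
    Summable (fun n : ℕ => c ^ n * x ^ n / ((n.factorial : ℝ)) ^ 2) := by
  refine Summable.of_abs ?_
  simpa only [term_abs] using summable_abs_S c x

lemma abs_S_le (c x : ℝ) : |S c x| ≤ S |c| |x| := by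
  have h1 : |S c x| ≤ ∑' n : ℕ, |c ^ n * x ^ n / ((n.factorial : ℝ)) ^ 2| := by
    simpa [S] using norm_tsum_le_tsum_norm (f := fun n : ℕ => c ^ n * x ^ n / ((n.factorial : ℝ))^2)
      (by simpa only [Real.norm_eq_abs, term_abs] using summable_abs_S c x)
  refine h1.trans_eq (tsum_congr fun n => ?_)
  rw [term_abs, abs_mul, mul_pow]

lemma exp_eq_tsum (x : ℝ) : Real.exp x = ∑' n : ℕ, x ^ n / n.factorial := by
  rw [Real.exp_eq_exp_ℝ, NormedSpace.exp_eq_tsum_div]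

lemma S_le_exp {c x : ℝ} (hc : 0 ≤ c) (hx : 0 ≤ x) :
    S c x ≤ Real.exp (2 * Real.sqrt (c * x)) := by
  set a := Real.sqrt (c * x) with ha
  have ha0 : 0 ≤ a := Real.sqrt_nonneg _
  have hsum : Summable (fun n : ℕ => a ^ n / n.factorial) := Real.summable_pow_div_factorial a
  have hexp : ∑' n : ℕ, a ^ n / (n.factorial : ℝ) = Real.exp a := (exp_eq_tsum a).symm
  have hterm : ∀ n : ℕ, c ^ n * x ^ n / ((n.factorial : ℝ)) ^ 2
      = (a ^ n / n.factorial) ^ 2 := by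
    intro n
    have : a ^ 2 = c * x := Real.sq_sqrt (by positivity)
    rw [div_pow, ← pow_mul, mul_comm n 2, pow_mul, this, mul_pow]
  have hle : ∀ n : ℕ, c ^ n * x ^ n / ((n.factorial : ℝ)) ^ 2
      ≤ (a ^ n / n.factorial) * Real.exp a := by
    intro n
    rw [hterm n, sq]
    have h1 : a ^ n / (n.factorial : ℝ) ≤ Real.exp a := by
      rw [← hexp]
      exact Summable.le_tsum hsum n (fun m _ => by positivity)
    exact mul_le_mul_of_nonneg_left h1 (by positivity)
  have h2 : S c x ≤ ∑' n : ℕ, (a ^ n / n.factorial) * Real.exp a := by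
    refine Summable.tsum_le_tsum hle (summable_S c x) (hsum.mul_right _)
  calc S c x ≤ ∑' n : ℕ, (a ^ n / n.factorial) * Real.exp a := h2
    _ = Real.exp a * Real.exp a := by rw [tsum_mul_right, hexp]
    _ = Real.exp (2 * a) := by rw [← Real.exp_add, two_mul]

lemma S_nonneg {c x : ℝ} (hc : 0 ≤ c) (hx : 0 ≤ x) : 0 ≤ S c x :=
  tsum_nonneg fun n => by positivity

lemma measurable_S (c : ℝ) : Measurable (S c) := by
  apply measurable_of_tendsto_metrizable
    (f := fun N x => ∑ n ∈ Finset.range N, c ^ n * x ^ n / ((n.factorial : ℝ)) ^ 2)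
  · intro N
    exact Finset.measurable_sum _ fun n _ => by fun_prop
  · rw [tendsto_pi_nhds]
    intro x
    exact (summable_S c x).hasSum.tendsto_sum_nat

lemma integrableOn_pow_exp (n : ℕ) {s : ℝ} (hs : 0 < s) :
    IntegrableOn (fun x : ℝ => x ^ n * Real.exp (-(s * x))) (Ioi 0) := by
  have := integrableOn_rpow_mul_exp_neg_mul_rpow (s := (n:ℝ)) (p := 1) (b := s)
    (lt_of_lt_of_le (by norm_num) (Nat.cast_nonneg n)) one_pos hs
  simpa [Real.rpow_natCast, Real.rpow_one, neg_mul] using this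

lemma integral_pow_exp (n : ℕ) {s : ℝ} (hs : 0 < s) :
    ∫ x in Ioi (0:ℝ), x ^ n * Real.exp (-(s * x)) = n.factorial / s ^ (n + 1) := by
  have h := Real.integral_rpow_mul_exp_neg_mul_Ioi (a := (n:ℝ) + 1) (r := s)
    (by positivity) hs
  have h2 : ∫ t in Ioi (0:ℝ), t ^ ((n:ℝ) + 1 - 1) * Real.exp (-(s * t))
      = ∫ t in Ioi (0:ℝ), t ^ n * Real.exp (-(s * t)) := by
    refine setIntegral_congr_fun measurableSet_Ioi (fun t ht => ?_)
    rw [add_sub_cancel_right, Real.rpow_natCast]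
  rw [h2] at h
  rw [h]
  rw [show ((n:ℝ) + 1) = ((n + 1 : ℕ) : ℝ) by push_cast; ring, Real.rpow_natCast]
  push_cast
  rw [Real.Gamma_nat_eq_factorial, div_pow, one_pow]
  ring

lemma key_integrable (c : ℝ) {s : ℝ} (hs : 0 < s) :
    IntegrableOn (fun x => Real.exp (-(s * x)) * S c x) (Ioi 0) := by
  refine Integrable.mono' (g := fun x => Real.exp (2 * |c| / s) * Real.exp (-(s / 2) * x)) ?_ ?_ ?_
  · exact ((exp_neg_integrableOn_Ioi 0 (by linarith)).const_mul _)
  · exact ((Real.measurable_exp.comp (measurable_const.mul measurable_id).neg).mul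
      (measurable_S c)).aestronglyMeasurable
  · filter_upwards [ae_restrict_mem measurableSet_Ioi] with x hx
    have hx0 : (0:ℝ) ≤ x := le_of_lt hx
    have h1 : |Real.exp (-(s * x)) * S c x| ≤ Real.exp (-(s * x)) * S |c| x := by
      rw [abs_mul, abs_of_nonneg (Real.exp_pos _).le]
      have := abs_S_le c x
      rw [abs_of_nonneg hx0] at this
      exact mul_le_mul_of_nonneg_left this (Real.exp_pos _).le
    have h2 : S |c| x ≤ Real.exp (2 * Real.sqrt (|c| * x)) := S_le_exp (abs_nonneg c) hx0
    have h3 : 2 * Real.sqrt (|c| * x) ≤ s / 2 * x + 2 * |c| / s := by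
      have e1 : Real.sqrt (s / 2) ^ 2 = s / 2 := Real.sq_sqrt (by positivity)
      have e2 : Real.sqrt (2 * |c| / s) ^ 2 = 2 * |c| / s := Real.sq_sqrt (by positivity)
      have e3 : Real.sqrt (s / 2) * Real.sqrt (2 * |c| / s) * Real.sqrt x
          = Real.sqrt (|c| * x) := by
        rw [← Real.sqrt_mul (by positivity), ← Real.sqrt_mul (by positivity)]
        congr 1
        field_simp
      have e4 : Real.sqrt x ^ 2 = x := Real.sq_sqrt hx0
      nlinarith [sq_nonneg (Real.sqrt (s / 2) * Real.sqrt x - Real.sqrt (2 * |c| / s))]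
    calc ‖Real.exp (-(s * x)) * S c x‖ ≤ Real.exp (-(s * x)) * Real.exp (2 * Real.sqrt (|c| * x)) := by
          refine h1.trans (mul_le_mul_of_nonneg_left h2 (Real.exp_pos _).le)
      _ = Real.exp (-(s * x) + 2 * Real.sqrt (|c| * x)) := (Real.exp_add _ _).symm
      _ ≤ Real.exp (2 * |c| / s + -(s / 2) * x) := by
          apply Real.exp_le_exp.mpr; nlinarith
      _ = Real.exp (2 * |c| / s) * Real.exp (-(s / 2) * x) := Real.exp_add _ _

lemma key_integral (c : ℝ) {s : ℝ} (hs : 0 < s) :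
    ∫ x in Ioi (0:ℝ), Real.exp (-(s * x)) * S c x = Real.exp (c / s) / s := by
  have hpt : ∀ x : ℝ, Real.exp (-(s * x)) * S c x
      = ∑' n : ℕ, (c ^ n / ((n.factorial : ℝ)) ^ 2) * (x ^ n * Real.exp (-(s * x))) := by
    intro x
    rw [S, ← tsum_mul_left]
    exact tsum_congr fun n => by ring
  have hF_int : ∀ n : ℕ, Integrable
      (fun x => (c ^ n / ((n.factorial : ℝ)) ^ 2) * (x ^ n * Real.exp (-(s * x))))
      (volume.restrict (Ioi 0)) := fun n => (integrableOn_pow_exp n hs).const_mul _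
  have hnorm : ∀ n : ℕ, ∫ x in Ioi (0:ℝ),
      ‖(c ^ n / ((n.factorial : ℝ)) ^ 2) * (x ^ n * Real.exp (-(s * x)))‖
      = (|c| / s) ^ n / n.factorial * (1 / s) := by
    intro n
    have : ∀ x ∈ Ioi (0:ℝ), ‖(c ^ n / ((n.factorial : ℝ)) ^ 2) * (x ^ n * Real.exp (-(s * x)))‖
        = (|c| ^ n / ((n.factorial : ℝ)) ^ 2) * (x ^ n * Real.exp (-(s * x))) := by
      intro x hx
      have hx0 : (0:ℝ) ≤ x := le_of_lt hx
      rw [Real.norm_eq_abs, abs_mul, abs_div, abs_pow, abs_pow,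
        Nat.abs_cast,
        abs_of_nonneg (by positivity : (0:ℝ) ≤ x ^ n * Real.exp (-(s * x)))]
    rw [setIntegral_congr_fun measurableSet_Ioi this, integral_const_mul,
      integral_pow_exp n hs]
    have hfne : ((n.factorial : ℝ)) ≠ 0 := by positivity
    field_simp
    rw [div_pow, pow_succ, mul_comm (s ^ n) s, mul_assoc, mul_div_assoc', mul_div_right_comm, div_self (pow_ne_zero n hs.ne'), one_mul, mul_comm]
  have hsum : Summable fun n : ℕ => ∫ x in Ioi (0:ℝ),
      ‖(c ^ n / ((n.factorial : ℝ)) ^ 2) * (x ^ n * Real.exp (-(s * x)))‖ := by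
    simp_rw [hnorm]
    exact (Real.summable_pow_div_factorial (|c| / s)).mul_right _
  have hmain := integral_tsum_of_summable_integral_norm hF_int hsum
  calc ∫ x in Ioi (0:ℝ), Real.exp (-(s * x)) * S c x
      = ∫ x in Ioi (0:ℝ), ∑' n : ℕ,
        (c ^ n / ((n.factorial : ℝ)) ^ 2) * (x ^ n * Real.exp (-(s * x))) := by
        simp_rw [hpt]
    _ = ∑' n : ℕ, ∫ x in Ioi (0:ℝ),
        (c ^ n / ((n.factorial : ℝ)) ^ 2) * (x ^ n * Real.exp (-(s * x))) := hmain.symm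
    _ = ∑' n : ℕ, (c / s) ^ n / n.factorial * (1 / s) := by
        refine tsum_congr fun n => ?_
        rw [integral_const_mul, integral_pow_exp n hs]
        have hfne : ((n.factorial : ℝ)) ≠ 0 := by positivity
        field_simp
        rw [div_pow, pow_succ, mul_comm (s ^ n) s, mul_assoc, mul_div_assoc', mul_div_right_comm, div_self (pow_ne_zero n hs.ne'), one_mul, mul_comm]
    _ = Real.exp (c / s) / s := by
        rw [tsum_mul_right, ← exp_eq_tsum]
        ring

lemma fubini_integrable {z : ℝ} (hz : 0 < z) :
    Integrable (Function.uncurry fun x t => Real.exp (-(x * t)) / t * S (-z) x)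
      ((volume.restrict (Ioi (0:ℝ))).prod (volume.restrict (Ioi (1:ℝ)))) := by
  have hM : Measurable fun p : ℝ × ℝ => Real.exp (-(p.1 * p.2)) / p.2 * S (-z) p.1 :=
    ((Real.measurable_exp.comp (measurable_fst.mul measurable_snd).neg).div
      measurable_snd).mul ((measurable_S (-z)).comp measurable_fst)
  have hmeas : AEStronglyMeasurable
      (Function.uncurry fun x t => Real.exp (-(x * t)) / t * S (-z) x)
      ((volume.restrict (Ioi (0:ℝ))).prod (volume.restrict (Ioi (1:ℝ)))) :=
    hM.aestronglyMeasurable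
  rw [integrable_prod_iff' hmeas]
  constructor
  · filter_upwards [ae_restrict_mem measurableSet_Ioi] with t ht
    have ht0 : (0:ℝ) < t := lt_trans one_pos ht
    have h := (key_integrable (-z) ht0).const_mul (1 / t)
    refine h.congr (Eventually.of_forall fun x => ?_)
    simp only [Function.uncurry_apply_pair]
    rw [mul_comm x t]
    ring
  · have hMnorm : StronglyMeasurable fun t : ℝ =>
        ∫ x in Ioi (0:ℝ), ‖Real.exp (-(x * t)) / t * S (-z) x‖ :=
      StronglyMeasurable.integral_prod_left' (f := fun p : ℝ × ℝ =>
        ‖Real.exp (-(p.1 * p.2)) / p.2 * S (-z) p.1‖) hM.norm.stronglyMeasurable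
    refine Integrable.mono' (g := fun t => Real.exp z * t ^ (-2:ℝ))
      ((integrableOn_Ioi_rpow_of_lt (by norm_num) one_pos).const_mul _)
      hMnorm.aestronglyMeasurable ?_
    filter_upwards [ae_restrict_mem measurableSet_Ioi] with t ht
    have ht0 : (0:ℝ) < t := lt_trans one_pos ht
    have ht1 : (1:ℝ) ≤ t := le_of_lt ht
    have ht2 : t ^ (-2:ℝ) = 1 / t ^ 2 := by
      rw [show ((-2:ℝ)) = -((2:ℕ):ℝ) by norm_num, Real.rpow_neg ht0.le, Real.rpow_natCast,
        one_div]
    have hb : ∫ x in Ioi (0:ℝ), ‖Real.exp (-(x * t)) / t * S (-z) x‖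
        ≤ ∫ x in Ioi (0:ℝ), (1 / t) * (Real.exp (-(t * x)) * S z x) := by
      refine integral_mono_of_nonneg (Eventually.of_forall fun x => norm_nonneg _)
        ((key_integrable z ht0).const_mul _) ?_
      filter_upwards [ae_restrict_mem measurableSet_Ioi] with x hx
      have hx0 : (0:ℝ) ≤ x := le_of_lt hx
      have h1 : |S (-z) x| ≤ S z x := by
        have := abs_S_le (-z) x
        rwa [abs_neg, abs_of_nonneg hz.le, abs_of_nonneg hx0] at this
      calc ‖Real.exp (-(x * t)) / t * S (-z) x‖
          = 1 / t * (Real.exp (-(t * x)) * |S (-z) x|) := by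
            rw [Real.norm_eq_abs, abs_mul, abs_div, abs_of_nonneg (Real.exp_pos _).le,
              abs_of_nonneg ht0.le, mul_comm x t]
            ring
        _ ≤ 1 / t * (Real.exp (-(t * x)) * S z x) := by gcongr
    have hval : ∫ x in Ioi (0:ℝ), (1 / t) * (Real.exp (-(t * x)) * S z x)
        = 1 / t * (Real.exp (z / t) / t) := by
      rw [integral_const_mul, key_integral z ht0]
    have hnn : 0 ≤ ∫ x in Ioi (0:ℝ), ‖Real.exp (-(x * t)) / t * S (-z) x‖ :=
      integral_nonneg fun x => norm_nonneg _
    simp only [Function.uncurry_apply_pair]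
    rw [Real.norm_of_nonneg hnn]
    calc ∫ x in Ioi (0:ℝ), ‖Real.exp (-(x * t)) / t * S (-z) x‖
        ≤ 1 / t * (Real.exp (z / t) / t) := hb.trans_eq hval
      _ ≤ Real.exp z * t ^ (-2:ℝ) := by
          rw [ht2]
          have : Real.exp (z / t) ≤ Real.exp z :=
            Real.exp_le_exp.mpr (div_le_self hz.le ht1)
          rw [one_div, inv_mul_eq_div, div_div, ← sq]
          rw [div_le_iff₀ (by positivity)]
          calc Real.exp (z / t) ≤ Real.exp z := this
            _ = Real.exp z * (1 / t ^ 2) * t ^ 2 := by field_simp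


lemma besselJ0_eq_S {z x : ℝ} (hz : 0 ≤ z) (hx : 0 ≤ x) :
    besselJ0 (2 * Real.sqrt (z * x)) = S (-z) x := by
  unfold besselJ0 S
  refine tsum_congr fun n => ?_
  have h1 : 2 * Real.sqrt (z * x) / 2 = Real.sqrt (z * x) := by ring
  rw [h1]
  have h2 : Real.sqrt (z * x) ^ (2 * n) = (z * x) ^ n := by
    rw [pow_mul, Real.sq_sqrt (by positivity)]
  rw [h2]
  rw [mul_pow, neg_pow]
  ring

lemma ftc_piece {z : ℝ} (hz : 0 < z) :
    ∫ t in Ioi (1:ℝ), Real.exp (-(z / t)) / t ^ 2 = 1 / z - Real.exp (-z) / z := by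
  have hderiv : ∀ t ∈ Ioi (1:ℝ), HasDerivAt (fun t => Real.exp (-(z / t)) / z)
      (Real.exp (-(z / t)) / t ^ 2) t := by
    intro t ht
    have ht0 : t ≠ 0 := (lt_trans one_pos ht).ne'
    have h1 : HasDerivAt (fun t : ℝ => -(z / t)) (z / t ^ 2) t := by
      simp only [div_eq_mul_inv]
      simpa [Pi.neg_def] using ((hasDerivAt_inv ht0).const_mul z).neg
    have h2 := (Real.hasDerivAt_exp (-(z / t))).comp t h1
    have h3 : HasDerivAt (fun t => Real.exp (-(z / t)) / z)
        (Real.exp (-(z / t)) * (z / t ^ 2) / z) t := h2.div_const z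
    convert h3 using 1
    field_simp
  have hcont : ContinuousWithinAt (fun t => Real.exp (-(z / t)) / z) (Ici (1:ℝ)) 1 := by
    apply ContinuousAt.continuousWithinAt
    have : ContinuousAt (fun t : ℝ => -(z / t)) 1 :=
      ((continuousAt_const.div continuousAt_id one_ne_zero)).neg
    exact (Real.continuous_exp.continuousAt.comp this).div_const z
  have hint : IntegrableOn (fun t => Real.exp (-(z / t)) / t ^ 2) (Ioi (1:ℝ)) := by
    refine Integrable.mono' (integrableOn_Ioi_rpow_of_lt (show (-2:ℝ) < -1 by norm_num) one_pos)
      ?_ ?_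
    · exact ((Real.measurable_exp.comp ((measurable_const.div measurable_id)).neg).div
        (measurable_id.pow_const 2)).aestronglyMeasurable
    · filter_upwards [ae_restrict_mem measurableSet_Ioi] with t ht
      have ht0 : (0:ℝ) < t := lt_trans one_pos ht
      have ht2 : t ^ (-2:ℝ) = 1 / t ^ 2 := by
        rw [show ((-2:ℝ)) = -((2:ℕ):ℝ) by norm_num, Real.rpow_neg ht0.le, Real.rpow_natCast,
          one_div]
      rw [Real.norm_of_nonneg (by positivity), ht2]
      have : Real.exp (-(z / t)) ≤ 1 := by
        rw [Real.exp_le_one_iff]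
        have : 0 ≤ z / t := by positivity
        linarith
      rw [div_le_div_iff₀ (by positivity) (by positivity)]
      nlinarith [sq_nonneg t]
  have htend : Tendsto (fun t => Real.exp (-(z / t)) / z) atTop (𝓝 (1 / z)) := by
    have h1 : Tendsto (fun t : ℝ => z / t) atTop (𝓝 0) :=
      tendsto_const_nhds.div_atTop tendsto_id
    have h2 : Tendsto (fun t : ℝ => Real.exp (-(z / t))) atTop (𝓝 1) := by
      have h0 : Tendsto (fun t : ℝ => -(z / t)) atTop (𝓝 0) := by simpa using h1.neg
      simpa [Function.comp_def] using (Real.continuous_exp.tendsto 0).comp h0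
    simpa [Real.exp_zero] using h2.div_const z
  have := integral_Ioi_of_hasDerivAt_of_tendsto hcont hderiv hint htend
  rw [this]
  norm_num


theorem stmt_8 (z : ℝ) (hz : 0 < z) :
    ∫ x in Ioi (0:ℝ), negEi x * besselJ0 (2 * Real.sqrt (z * x)) =
      (Real.exp (-z) - 1) / z := by
  have step1 : ∫ x in Ioi (0:ℝ), negEi x * besselJ0 (2 * Real.sqrt (z * x))
      = ∫ x in Ioi (0:ℝ), -(∫ t in Ioi (1:ℝ), Real.exp (-(x * t)) / t * S (-z) x) := by
    refine setIntegral_congr_fun measurableSet_Ioi fun x hx => ?_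
    have hx0 : (0:ℝ) ≤ x := le_of_lt hx
    rw [besselJ0_eq_S hz.le hx0, negEi, neg_mul, integral_mul_const]
  rw [step1, integral_neg, integral_integral_swap (fubini_integrable hz)]
  have step2 : ∫ t in Ioi (1:ℝ), ∫ x in Ioi (0:ℝ), Real.exp (-(x * t)) / t * S (-z) x
      = ∫ t in Ioi (1:ℝ), Real.exp (-(z / t)) / t ^ 2 := by
    refine setIntegral_congr_fun measurableSet_Ioi fun t ht => ?_
    have ht0 : (0:ℝ) < t := lt_trans one_pos ht
    have hpt : ∀ x : ℝ, Real.exp (-(x * t)) / t * S (-z) x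
        = (1 / t) * (Real.exp (-(t * x)) * S (-z) x) := fun x => by
      rw [mul_comm x t]; ring
    simp_rw [hpt]
    rw [integral_const_mul, key_integral (-z) ht0, neg_div]
    ring
  rw [step2, ftc_piece hz]
  field_simp
  ring
end

section
/- For all a₁ > 0 and a₂ > 0, ∫_0^∞ Ei(−a₁ x) Ei(−a₂ x) dx = (1/a₁ + 1/a₂) ln(a₁+a₂) − (ln a₁)/a₂ − (ln a₂)/a₁. -/
open MeasureTheory Set

open Real Filter Topology

lemma expDiv_integrableOn {x : ℝ} (hx : 0 < x) :
    IntegrableOn (fun u => Real.exp (-u) / u) (Ioi x) := by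
  have h := exp_neg_integrableOn_Ioi x (zero_lt_one (α := ℝ))
  refine Integrable.mono (h.const_mul x⁻¹) ?_ ?_
  · exact ((measurable_exp.comp measurable_neg).div measurable_id).aestronglyMeasurable.restrict
  · filter_upwards [ae_restrict_mem measurableSet_Ioi] with u hu
    have hu0 : 0 < u := hx.trans hu
    rw [Real.norm_eq_abs, Real.norm_eq_abs, neg_one_mul,
      abs_of_nonneg (by positivity), abs_of_nonneg (by positivity),
      div_eq_mul_inv, mul_comm (x⁻¹)]
    exact mul_le_mul_of_nonneg_left (inv_anti₀ hx hu.le) (Real.exp_pos _).le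

lemma negEi_eq {x : ℝ} (hx : 0 < x) :
    negEi x = -∫ u in Ioi x, Real.exp (-u) / u := by
  unfold negEi
  congr 1
  have := integral_comp_mul_left_Ioi (fun u => x * (Real.exp (-u) / u)) 1 hx
  simp only [smul_eq_mul, mul_one] at this
  rw [← integral_const_mul x⁻¹] at this
  simp only [inv_mul_cancel_left₀ hx.ne'] at this
  rw [← this]
  refine setIntegral_congr_fun measurableSet_Ioi fun t ht => ?_
  have ht0 : (0:ℝ) < t := zero_lt_one.trans ht
  field_simp

lemma negEi_nonpos (y : ℝ) : negEi y ≤ 0 := by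
  unfold negEi
  rw [neg_nonpos]
  refine setIntegral_nonneg measurableSet_Ioi fun t ht => ?_
  have : (0:ℝ) < t := zero_lt_one.trans ht
  positivity

lemma negEi_ge {y : ℝ} (hy : 0 < y) : -(Real.exp (-y) / y) ≤ negEi y := by
  rw [negEi_eq hy, neg_le_neg_iff]
  calc ∫ u in Ioi y, Real.exp (-u) / u
      ≤ ∫ u in Ioi y, Real.exp (-u) / y := by
        refine setIntegral_mono_on (expDiv_integrableOn hy)
          ((exp_neg_integrableOn_Ioi y zero_lt_one).const_mul y⁻¹ |>.congr ?_)
          measurableSet_Ioi fun u hu => ?_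
        · filter_upwards with u; rw [neg_one_mul]; ring
        · have hu0 : 0 < u := hy.trans hu
          exact div_le_div_of_nonneg_left (Real.exp_pos _).le hy hu.le
    _ = Real.exp (-y) / y := by
        simp only [div_eq_mul_inv, integral_mul_const, integral_exp_neg_Ioi]

lemma negEi_abs_le {y : ℝ} (hy : 0 < y) : |negEi y| ≤ Real.exp (-y) / y := by
  rw [abs_le]
  exact ⟨negEi_ge hy, (negEi_nonpos y).trans (by positivity)⟩

lemma expDiv_continuousAt {x : ℝ} (hx : 0 < x) :
    ContinuousAt (fun u => Real.exp (-u) / u) x :=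
  ((Real.continuous_exp.comp continuous_neg).continuousAt).div continuousAt_id hx.ne'

lemma expDiv_intervalIntegrable {x b : ℝ} (hx : 0 < x) (hb : 0 < b) :
    IntervalIntegrable (fun u => Real.exp (-u) / u) volume x b := by
  apply ContinuousOn.intervalIntegrable
  intro u hu
  have hu0 : 0 < u := lt_of_lt_of_le (lt_min hx hb) hu.1
  exact (expDiv_continuousAt hu0).continuousWithinAt

lemma negEi_decomp {y b : ℝ} (hy : 0 < y) (hyb : y ≤ b) :
    negEi y = -(∫ u in y..b, Real.exp (-u) / u) - ∫ u in Ioi b, Real.exp (-u) / u := by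
  have hb : 0 < b := hy.trans_le hyb
  rw [negEi_eq hy, intervalIntegral.integral_of_le hyb]
  have : (Ioi y) = Ioc y b ∪ Ioi b := (Ioc_union_Ioi_eq_Ioi hyb).symm
  rw [this, setIntegral_union (Ioc_disjoint_Ioi le_rfl) measurableSet_Ioi
    ((expDiv_integrableOn hy).mono_set Ioc_subset_Ioi_self) (expDiv_integrableOn hb)]
  ring

lemma negEi_hasDerivAt {x : ℝ} (hx : 0 < x) :
    HasDerivAt negEi (Real.exp (-x) / x) x := by
  set f : ℝ → ℝ := fun u => Real.exp (-u) / u with hf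
  set b : ℝ := x + 1 with hbdef
  have hb : 0 < b := by positivity
  have hxb : x < b := by simp [hbdef]
  have hmeas : StronglyMeasurableAtFilter f (𝓝 x) :=
    ⟨univ, univ_mem, (((measurable_exp.comp measurable_neg).div
      measurable_id).aestronglyMeasurable).restrict⟩
  have hd : HasDerivAt (fun y => ∫ u in y..b, f u) (-f x) x :=
    intervalIntegral.integral_hasDerivAt_left (expDiv_intervalIntegrable hx hb)
      hmeas (expDiv_continuousAt hx)
  have hd2 : HasDerivAt (fun y => -(∫ u in y..b, f u) - ∫ u in Ioi b, f u) (f x) x := by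
    simpa using (hd.neg.sub_const (∫ u in Ioi b, f u))
  refine hd2.congr_of_eventuallyEq ?_
  have hmem : Ioo (0:ℝ) b ∈ 𝓝 x := Ioo_mem_nhds hx hxb
  filter_upwards [hmem] with y hy
  exact negEi_decomp hy.1 hy.2.le

lemma g_bound {u : ℝ} (hu : 0 < u) : |(Real.exp (-u) - 1) / u| ≤ 1 := by
  have h1 : Real.exp (-u) ≤ 1 := by
    simpa using Real.exp_le_exp.mpr (neg_nonpos.mpr hu.le)
  rw [abs_div, abs_of_pos hu, div_le_one hu, abs_sub_comm, abs_of_nonneg (by linarith)]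
  linarith [Real.add_one_le_exp (-u)]

lemma g_integrableOn {x : ℝ} (hx : 0 ≤ x) :
    IntegrableOn (fun u => (Real.exp (-u) - 1) / u) (Ioc 0 x) := by
  refine Integrable.mono' (integrable_const 1) ?_ ?_
  · exact (((measurable_exp.comp measurable_neg).sub measurable_const).div
      measurable_id).aestronglyMeasurable.restrict
  · filter_upwards [ae_restrict_mem measurableSet_Ioc] with u hu
    exact g_bound hu.1

lemma negEi_sub_log_tendsto :
    ∃ C : ℝ, Tendsto (fun x => negEi x - Real.log x) (𝓝[>] (0:ℝ)) (𝓝 C) := by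
  set g : ℝ → ℝ := fun u => (Real.exp (-u) - 1) / u with hg
  set K : ℝ := ∫ u in Ioi (1:ℝ), Real.exp (-u) / u with hK
  set I : ℝ := ∫ u in Ioc (0:ℝ) 1, g u with hI
  refine ⟨-I - K, ?_⟩
  have key : ∀ x ∈ Ioo (0:ℝ) 1, negEi x - Real.log x = -(I - ∫ u in Ioc 0 x, g u) - K := by
    intro x hx
    obtain ⟨hx0, hx1⟩ := hx
    have hdec := negEi_decomp hx0 hx1.le
    have hsplit : (∫ u in x..1, Real.exp (-u) / u) =
        (∫ u in x..1, g u) + ∫ u in x..(1:ℝ), 1 / u := by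
      rw [← intervalIntegral.integral_add]
      · refine intervalIntegral.integral_congr fun u hu => ?_
        have hu0 : 0 < u := lt_of_lt_of_le (lt_min hx0 zero_lt_one) hu.1
        simp only [hg]
        field_simp
        ring
      · apply ContinuousOn.intervalIntegrable
        intro u hu
        have hu0 : 0 < u := lt_of_lt_of_le (lt_min hx0 zero_lt_one) hu.1
        exact (((Real.continuous_exp.comp continuous_neg).continuousAt.sub
          continuousAt_const).div continuousAt_id hu0.ne').continuousWithinAt
      · apply ContinuousOn.intervalIntegrable
        intro u hu
        have hu0 : 0 < u := lt_of_lt_of_le (lt_min hx0 zero_lt_one) hu.1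
        exact (continuousAt_const.div continuousAt_id hu0.ne').continuousWithinAt
    have hlog : (∫ u in x..(1:ℝ), 1 / u) = -Real.log x := by
      rw [integral_one_div (fun h => (lt_min hx0 zero_lt_one).not_ge h.1),
        one_div, Real.log_inv]
    have hg2 : IntegrableOn g (Ioc x 1) := by
      refine (ContinuousOn.integrableOn_compact (isCompact_Icc (a := x) (b := 1))
        ?_).mono_set Ioc_subset_Icc_self
      intro u hu
      have hu0 : 0 < u := hx0.trans_le hu.1
      exact (((Real.continuous_exp.comp continuous_neg).continuousAt.sub
        continuousAt_const).div continuousAt_id hu0.ne').continuousWithinAt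
    have hIsplit : I = (∫ u in Ioc 0 x, g u) + ∫ u in x..1, g u := by
      rw [intervalIntegral.integral_of_le hx1.le, hI,
        ← Ioc_union_Ioc_eq_Ioc hx0.le hx1.le,
        setIntegral_union (Ioc_disjoint_Ioc.mpr
          (le_trans (min_le_left _ _) (le_max_right _ _))) measurableSet_Ioc
          (g_integrableOn hx0.le) hg2]
    rw [hdec, hsplit, hlog, ← hK]
    have : (∫ u in x..1, g u) = I - ∫ u in Ioc 0 x, g u := by rw [hIsplit]; ring
    rw [this]; ring
  have hev : (fun x => negEi x - Real.log x) =ᶠ[𝓝[>] (0:ℝ)]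
      fun x => -(I - ∫ u in Ioc 0 x, g u) - K := by
    filter_upwards [Ioo_mem_nhdsGT_of_mem (by simp : (0:ℝ) ∈ Ico (0:ℝ) 1)] with x hx
    exact key x hx
  rw [Filter.tendsto_congr' hev]
  have htail : Tendsto (fun x => ∫ u in Ioc (0:ℝ) x, g u) (𝓝[>] (0:ℝ)) (𝓝 0) := by
    refine squeeze_zero_norm' (a := fun x : ℝ => x) ?_ ?_
    · filter_upwards [self_mem_nhdsWithin] with x hx
      have hx0 : (0:ℝ) < x := hx
      calc ‖∫ u in Ioc (0:ℝ) x, g u‖ ≤ 1 * (volume (Ioc (0:ℝ) x)).toReal := by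
            apply norm_setIntegral_le_of_norm_le_const
            · simp [Real.volume_Ioc]
            · intro u hu
              simpa using g_bound hu.1
        _ = x := by simp [Real.volume_Ioc, hx0.le]
    · exact (continuous_id.tendsto (0:ℝ)).mono_left nhdsWithin_le_nhds
  have : Tendsto (fun x => -(I - ∫ u in Ioc (0:ℝ) x, g u) - K) (𝓝[>] (0:ℝ))
      (𝓝 (-(I - 0) - K)) := (((tendsto_const_nhds.sub htail).neg).sub tendsto_const_nhds)
  simpa using this

lemma hE_deriv {a x : ℝ} (ha : 0 < a) (hx : 0 < x) :
    HasDerivAt (fun y => negEi (a * y)) (Real.exp (-(a * x)) / x) x := by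
  have h := (negEi_hasDerivAt (mul_pos ha hx)).comp x ((hasDerivAt_id x).const_mul a)
  simp only [Function.comp_def, id_eq, mul_one] at h
  refine h.congr_deriv ?_
  field_simp

lemma hexp_deriv {a x : ℝ} :
    HasDerivAt (fun y => Real.exp (-(a * y))) (-a * Real.exp (-(a * x))) x := by
  have h := (Real.hasDerivAt_exp (-(a * x))).comp x (((hasDerivAt_id x).const_mul a).neg)
  simp only [Function.comp_def, id_eq, mul_one] at h
  refine h.congr_deriv ?_
  ring

lemma G_hasDerivAt {a₁ a₂ : ℝ} (ha₁ : 0 < a₁) (ha₂ : 0 < a₂) {x : ℝ} (hx : 0 < x) :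
    HasDerivAt (fun y => y * negEi (a₁ * y) * negEi (a₂ * y)
      + Real.exp (-(a₁ * y)) / a₁ * negEi (a₂ * y)
      + Real.exp (-(a₂ * y)) / a₂ * negEi (a₁ * y)
      - (1 / a₁ + 1 / a₂) * negEi ((a₁ + a₂) * y))
      (negEi (a₁ * x) * negEi (a₂ * x)) x := by
  have h1 := ((hasDerivAt_id x).mul (hE_deriv ha₁ hx)).mul (hE_deriv ha₂ hx)
  have h2 := ((hexp_deriv (a := a₁) (x := x)).div_const a₁).mul (hE_deriv ha₂ hx)
  have h3 := ((hexp_deriv (a := a₂) (x := x)).div_const a₂).mul (hE_deriv ha₁ hx)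
  have h4 := (hE_deriv (add_pos ha₁ ha₂) hx).const_mul (1 / a₁ + 1 / a₂)
  have h := ((h1.add h2).add h3).sub h4
  refine h.congr_deriv ?_
  have hsplit : Real.exp (-((a₁ + a₂) * x)) = Real.exp (-(a₁ * x)) * Real.exp (-(a₂ * x)) := by
    rw [← Real.exp_add]; ring_nf
  simp only [id_eq, Pi.mul_apply, hsplit]
  field_simp
  ring


lemma negEi_tendsto_atTop : Tendsto negEi atTop (𝓝 0) := by
  refine squeeze_zero_norm' (a := fun x => Real.exp (-x)) ?_ Real.tendsto_exp_neg_atTop_nhds_zero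
  filter_upwards [eventually_ge_atTop (1:ℝ)] with x hx
  have hx0 : (0:ℝ) < x := lt_of_lt_of_le zero_lt_one hx
  calc ‖negEi x‖ = |negEi x| := rfl
    _ ≤ Real.exp (-x) / x := negEi_abs_le hx0
    _ ≤ Real.exp (-x) := div_le_self (Real.exp_pos _).le hx

lemma exp_neg_mul_tendsto {a : ℝ} (ha : 0 < a) :
    Tendsto (fun x => Real.exp (-(a * x))) atTop (𝓝 0) :=
  Real.tendsto_exp_atBot.comp
    (tendsto_neg_atTop_atBot.comp (Filter.Tendsto.const_mul_atTop ha tendsto_id))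

lemma negEi_mul_tendsto {a : ℝ} (ha : 0 < a) :
    Tendsto (fun x => negEi (a * x)) atTop (𝓝 0) :=
  negEi_tendsto_atTop.comp (Filter.Tendsto.const_mul_atTop ha tendsto_id)

lemma xEE_tendsto {a₁ a₂ : ℝ} (ha₁ : 0 < a₁) (ha₂ : 0 < a₂) :
    Tendsto (fun x => x * negEi (a₁ * x) * negEi (a₂ * x)) atTop (𝓝 0) := by
  refine squeeze_zero_norm' (a := fun x => Real.exp (-(a₁ * x)) / (a₁ * a₂)) ?_
    (by simpa using (exp_neg_mul_tendsto ha₁).div_const (a₁ * a₂))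
  filter_upwards [eventually_ge_atTop (1:ℝ)] with x hx
  have hx0 : (0:ℝ) < x := lt_of_lt_of_le zero_lt_one hx
  have h1 : |negEi (a₁ * x)| ≤ Real.exp (-(a₁ * x)) / (a₁ * x) := negEi_abs_le (by positivity)
  have h2 : |negEi (a₂ * x)| ≤ Real.exp (-(a₂ * x)) / (a₂ * x) := negEi_abs_le (by positivity)
  calc ‖x * negEi (a₁ * x) * negEi (a₂ * x)‖
      = x * |negEi (a₁ * x)| * |negEi (a₂ * x)| := by
        rw [Real.norm_eq_abs, abs_mul, abs_mul, abs_of_pos hx0]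
    _ ≤ x * (Real.exp (-(a₁ * x)) / (a₁ * x)) * (Real.exp (-(a₂ * x)) / (a₂ * x)) := by
        gcongr
    _ = Real.exp (-(a₁ * x)) * Real.exp (-(a₂ * x)) / (a₁ * a₂ * x) := by
        field_simp
    _ ≤ Real.exp (-(a₁ * x)) * 1 / (a₁ * a₂ * 1) := by
        gcongr
        · exact Real.exp_le_one_iff.mpr (by nlinarith)
    _ = Real.exp (-(a₁ * x)) / (a₁ * a₂) := by ring

lemma g_bound' {u : ℝ} (hu : 0 < u) : |(Real.exp (-u) - 1) / u| ≤ 1 := by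
  have h1 : Real.exp (-u) ≤ 1 := by
    simpa using Real.exp_le_exp.mpr (neg_nonpos.mpr hu.le)
  rw [abs_div, abs_of_pos hu, div_le_one hu, abs_sub_comm, abs_of_nonneg (by linarith)]
  linarith [Real.add_one_le_exp (-u)]

lemma exp_sub_one_abs_le {u : ℝ} (hu : 0 < u) : |Real.exp (-u) - 1| ≤ u := by
  have := g_bound' hu
  rwa [abs_div, abs_of_pos hu, div_le_one hu] at this

lemma xlog_tendsto : Tendsto (fun x => x * Real.log x) (𝓝[>] (0:ℝ)) (𝓝 0) :=
  (tendsto_log_mul_rpow_nhdsGT_zero zero_lt_one).congr fun x => by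
    rw [Real.rpow_one]; ring

lemma xlog2_tendsto : Tendsto (fun x => x * Real.log x * Real.log x) (𝓝[>] (0:ℝ)) (𝓝 0) := by
  have h := tendsto_log_mul_rpow_nhdsGT_zero (by norm_num : (0:ℝ) < 1/2)
  have h2 := h.mul h
  rw [mul_zero] at h2
  refine h2.congr' ?_
  filter_upwards [self_mem_nhdsWithin] with x hx
  have hxx : x ^ (1/2:ℝ) * x ^ (1/2:ℝ) = x := by
    rw [← Real.rpow_add hx]; norm_num
  linear_combination (Real.log x * Real.log x) * hxx

lemma mul_maps_nhdsWithin {a : ℝ} (ha : 0 < a) :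
    Tendsto (fun x : ℝ => a * x) (𝓝[>] (0:ℝ)) (𝓝[>] (0:ℝ)) := by
  rw [tendsto_nhdsWithin_iff]
  constructor
  · have hcont : Continuous (fun x : ℝ => a * x) := continuous_const.mul continuous_id
    have := hcont.tendsto (0:ℝ)
    simpa using this.mono_left nhdsWithin_le_nhds
  · filter_upwards [self_mem_nhdsWithin] with x hx
    exact mul_pos ha hx

lemma c_tendsto {a C : ℝ} (ha : 0 < a)
    (hC : Tendsto (fun x => negEi x - Real.log x) (𝓝[>] (0:ℝ)) (𝓝 C)) :
    Tendsto (fun x => negEi (a * x) - Real.log x) (𝓝[>] (0:ℝ)) (𝓝 (C + Real.log a)) := by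
  refine ((hC.comp (mul_maps_nhdsWithin ha)).add tendsto_const_nhds).congr' ?_
  filter_upwards [self_mem_nhdsWithin] with x hx
  simp only [Function.comp]
  rw [Real.log_mul ha.ne' (ne_of_gt hx)]
  ring

lemma exp_factor_tendsto {a : ℝ} :
    Tendsto (fun x => (Real.exp (-(a * x)) - 1) / a) (𝓝[>] (0:ℝ)) (𝓝 0) := by
  have hcont : Continuous (fun x : ℝ => (Real.exp (-(a * x)) - 1) / a) := by continuity
  have := hcont.tendsto (0:ℝ)
  simp only [mul_zero, neg_zero, Real.exp_zero, sub_self, zero_div] at this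
  exact this.mono_left nhdsWithin_le_nhds

lemma exp_log_tendsto {a : ℝ} (ha : 0 < a) :
    Tendsto (fun x => (Real.exp (-(a * x)) - 1) / a * Real.log x) (𝓝[>] (0:ℝ)) (𝓝 0) := by
  refine squeeze_zero_norm' (a := fun x => |x * Real.log x|) ?_
    (by simpa using xlog_tendsto.abs)
  filter_upwards [self_mem_nhdsWithin] with x hx
  have hx0 : (0:ℝ) < x := hx
  have hb : |Real.exp (-(a * x)) - 1| ≤ a * x := exp_sub_one_abs_le (mul_pos ha hx0)
  calc ‖(Real.exp (-(a * x)) - 1) / a * Real.log x‖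
      = |Real.exp (-(a * x)) - 1| / a * |Real.log x| := by
        rw [Real.norm_eq_abs, abs_mul, abs_div, abs_of_pos ha]
    _ ≤ (a * x) / a * |Real.log x| := by gcongr
    _ = x * |Real.log x| := by field_simp
    _ = |x * Real.log x| := by rw [abs_mul, abs_of_pos hx0]

lemma G_tendsto_zero {a₁ a₂ C : ℝ} (ha₁ : 0 < a₁) (ha₂ : 0 < a₂)
    (hC : Tendsto (fun x => negEi x - Real.log x) (𝓝[>] (0:ℝ)) (𝓝 C)) :
    Tendsto (fun x => x * negEi (a₁*x) * negEi (a₂*x)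
      + Real.exp (-(a₁*x))/a₁ * negEi (a₂*x)
      + Real.exp (-(a₂*x))/a₂ * negEi (a₁*x)
      - (1/a₁ + 1/a₂) * negEi ((a₁+a₂)*x)) (𝓝[>] (0:ℝ))
    (𝓝 (1/a₁ * (Real.log a₂ - Real.log (a₁+a₂))
        + 1/a₂ * (Real.log a₁ - Real.log (a₁+a₂)))) := by
  have h1 := c_tendsto ha₁ hC
  have h2 := c_tendsto ha₂ hC
  have h12 := c_tendsto (add_pos ha₁ ha₂) hC
  have hid : Tendsto (fun x : ℝ => x) (𝓝[>] (0:ℝ)) (𝓝 0) := by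
    exact (continuous_id.tendsto (0:ℝ)).mono_left nhdsWithin_le_nhds
  have b1 := xlog2_tendsto.add (xlog_tendsto.mul (h1.add h2))
  have b2 := b1.add (hid.mul (h1.mul h2))
  have b3 := b2.add (exp_log_tendsto ha₁)
  have b4 := b3.add ((exp_factor_tendsto (a := a₁)).mul h2)
  have b5 := b4.add (exp_log_tendsto ha₂)
  have b6 := b5.add ((exp_factor_tendsto (a := a₂)).mul h1)
  have b7 := b6.add ((tendsto_const_nhds (x := 1/a₁)).mul (h2.sub h12))
  have hbig := b7.add ((tendsto_const_nhds (x := 1/a₂)).mul (h1.sub h12))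
  convert hbig using 2
  · ring
  · ring

theorem stmt_9 (a₁ a₂ : ℝ) (ha₁ : 0 < a₁) (ha₂ : 0 < a₂) :
    ∫ x in Ioi (0:ℝ), negEi (a₁ * x) * negEi (a₂ * x) =
      (1 / a₁ + 1 / a₂) * Real.log (a₁ + a₂) - Real.log a₁ / a₂ - Real.log a₂ / a₁ := by
  obtain ⟨C, hC⟩ := negEi_sub_log_tendsto
  set L₀ : ℝ := 1/a₁ * (Real.log a₂ - Real.log (a₁+a₂))
      + 1/a₂ * (Real.log a₁ - Real.log (a₁+a₂)) with hL₀
  set G : ℝ → ℝ := fun y => y * negEi (a₁*y) * negEi (a₂*y)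
      + Real.exp (-(a₁*y))/a₁ * negEi (a₂*y)
      + Real.exp (-(a₂*y))/a₂ * negEi (a₁*y)
      - (1/a₁ + 1/a₂) * negEi ((a₁+a₂)*y) with hG
  set Gt : ℝ → ℝ := fun y => if y ≤ 0 then L₀ else G y with hGt
  have hGt0 : Gt 0 = L₀ := by simp [hGt]
  have heqIoi : ∀ y : ℝ, 0 < y → Gt y = G y := fun y hy => by simp [hGt, not_le.mpr hy]
  have hcont : ContinuousWithinAt Gt (Ici 0) 0 := by
    rw [ContinuousWithinAt, hGt0]
    rw [show (Ici (0:ℝ)) = insert 0 (Ioi 0) from (Ioi_insert (a := (0:ℝ))).symm,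
      nhdsWithin_insert, tendsto_sup]
    constructor
    · simpa [hGt0] using tendsto_pure_nhds Gt 0
    · refine ((G_tendsto_zero ha₁ ha₂ hC).congr' ?_)
      filter_upwards [self_mem_nhdsWithin] with y hy
      exact (heqIoi y hy).symm
  have hderiv : ∀ x ∈ Ioi (0:ℝ), HasDerivAt Gt (negEi (a₁*x) * negEi (a₂*x)) x := by
    intro x hx
    refine (G_hasDerivAt ha₁ ha₂ hx).congr_of_eventuallyEq ?_
    filter_upwards [IsOpen.mem_nhds isOpen_Ioi hx] with y hy
    exact heqIoi y hy
  have hpos : ∀ x ∈ Ioi (0:ℝ), 0 ≤ negEi (a₁*x) * negEi (a₂*x) := fun x _ => by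
    nlinarith [negEi_nonpos (a₁*x), negEi_nonpos (a₂*x)]
  have htop : Tendsto Gt atTop (𝓝 0) := by
    have hGtop : Tendsto G atTop (𝓝 0) := by
      have h := (((xEE_tendsto ha₁ ha₂).add
        (((exp_neg_mul_tendsto ha₁).div_const a₁).mul (negEi_mul_tendsto ha₂))).add
        (((exp_neg_mul_tendsto ha₂).div_const a₂).mul (negEi_mul_tendsto ha₁))).sub
        ((negEi_mul_tendsto (add_pos ha₁ ha₂)).const_mul (1/a₁+1/a₂))
      rw [hG]
      convert h using 2
      simp
    refine hGtop.congr' ?_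
    filter_upwards [eventually_gt_atTop (0:ℝ)] with y hy
    exact (heqIoi y hy).symm
  have hint := integral_Ioi_of_hasDerivAt_of_nonneg hcont hderiv hpos htop
  rw [hint, hGt0, hL₀]
  ring
end

section
/- For every β > 0 and every s > 0, ∫_0^∞ x^{s−1} K₀(βx) dx = 2^{s−2} β^{−s} Γ(s/2)². -/
open MeasureTheory Filter Set

open Real Complex

lemma my_cos_gauss {b : ℝ} (hb : 0 < b) (x : ℝ) :
    ∫ t : ℝ, Real.cos (x * t) * Real.exp (-b * t ^ 2)
      = Real.sqrt (π / b) * Real.exp (-x ^ 2 / (4 * b)) := by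
  have hb' : 0 < (b : ℂ).re := by simpa using hb
  have h := fourierIntegral_gaussian hb' (x : ℂ)
  have hInt : Integrable (fun t : ℝ => Complex.exp (I * (x:ℂ) * (t:ℂ)) *
      Complex.exp (-(b:ℂ) * (t:ℂ) ^ 2)) := by
    have h2 := integrable_cexp_quadratic hb' (I * (x:ℂ)) 0
    apply h2.congr
    filter_upwards with t
    rw [← Complex.exp_add]
    ring_nf
  have hre0 : ∫ t : ℝ, (Complex.exp (I * (x:ℂ) * (t:ℂ)) *
      Complex.exp (-(b:ℂ) * (t:ℂ) ^ 2)).re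
      = ((π / (b:ℂ)) ^ (1 / 2 : ℂ) * Complex.exp (-(x:ℂ) ^ 2 / (4 * (b:ℂ)))).re := by
    rw [← h]
    simpa using integral_re hInt
  have hre := hre0
  have lhs_eq : ∀ t : ℝ, (Complex.exp (I * (x:ℂ) * (t:ℂ)) *
      Complex.exp (-(b:ℂ) * (t:ℂ) ^ 2)).re = Real.cos (x * t) * Real.exp (-b * t ^ 2) := by
    intro t
    have h1 : -(b:ℂ) * (t:ℂ) ^ 2 = ((-b * t ^ 2 : ℝ) : ℂ) := by push_cast; ring
    have h2 : I * (x:ℂ) * (t:ℂ) = ((x * t : ℝ) : ℂ) * I := by push_cast; ring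
    rw [h1, h2, ← Complex.ofReal_exp, mul_comm, Complex.re_ofReal_mul]
    rw [Complex.exp_ofReal_mul_I_re]
    ring
  rw [integral_congr_ae (Eventually.of_forall lhs_eq)] at hre
  rw [hre]
  have h3 : -(x:ℂ) ^ 2 / (4 * (b:ℂ)) = ((-x ^ 2 / (4 * b) : ℝ) : ℂ) := by push_cast; ring
  have h4 : ((π : ℂ) / (b : ℂ)) ^ (1 / 2 : ℂ) = ((((π / b) : ℝ) ^ ((1:ℝ)/2) : ℝ) : ℂ) := by
    rw [show (π : ℂ) / (b : ℂ) = (((π / b : ℝ)) : ℂ) by push_cast; ring]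
    rw [Complex.ofReal_cpow (by positivity)]
    norm_num
  rw [h3, h4, ← Complex.ofReal_exp, ← Complex.ofReal_mul]
  rw [Complex.ofReal_re, Real.sqrt_eq_rpow]

lemma my_cos_gauss_Ioi {b : ℝ} (hb : 0 < b) (x : ℝ) :
    (∫ t in Ioi (0:ℝ), Real.cos (x * t) * Real.exp (-b * t ^ 2))
      = Real.sqrt (π / b) / 2 * Real.exp (-x ^ 2 / (4 * b)) := by
  have h := @integral_comp_abs (fun u => Real.cos (x * u) * Real.exp (-b * u ^ 2))
  have h2 : (∫ t : ℝ, Real.cos (x * |t|) * Real.exp (-b * |t| ^ 2))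
      = ∫ t : ℝ, Real.cos (x * t) * Real.exp (-b * t ^ 2) := by
    apply integral_congr_ae
    filter_upwards with t
    rcases le_or_gt 0 t with ht | ht
    · rw [_root_.abs_of_nonneg ht]
    · rw [_root_.abs_of_neg ht, mul_neg, Real.cos_neg, neg_sq]
  rw [h2, my_cos_gauss hb x] at h
  linarith

lemma my_ibp_bound {x w T : ℝ} (hx : 0 < x) (hT : 0 ≤ T) :
    |∫ t in (0:ℝ)..T, Real.cos (x * t) * Real.exp (-w ^ 2 * t ^ 2)| ≤ 2 / x := by
  have hu : ∀ t ∈ uIcc (0:ℝ) T, HasDerivAt (fun t => Real.exp (-w ^ 2 * t ^ 2))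
      (-w ^ 2 * (2 * t) * Real.exp (-w ^ 2 * t ^ 2)) t := by
    intro t _
    have h1 : HasDerivAt (fun t : ℝ => -w ^ 2 * t ^ 2) (-w ^ 2 * (2 * t)) t := by
      simpa using ((hasDerivAt_pow 2 t).const_mul (-w ^ 2))
    simpa [mul_comm, Function.comp_def] using (Real.hasDerivAt_exp _).comp t h1
  have hv : ∀ t ∈ uIcc (0:ℝ) T, HasDerivAt (fun t => Real.sin (x * t) / x)
      (Real.cos (x * t)) t := by
    intro t _
    have h1 : HasDerivAt (fun t : ℝ => Real.sin (x * t)) (Real.cos (x * t) * x) t := by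
      simpa [mul_comm, Function.comp_def] using (Real.hasDerivAt_sin (x * t)).comp t
        ((hasDerivAt_id t).const_mul x)
    simpa [mul_div_cancel_right₀ _ hx.ne'] using h1.div_const x
  have hci : Continuous fun t : ℝ => -w ^ 2 * (2 * t) * Real.exp (-w ^ 2 * t ^ 2) := by
    fun_prop
  have hcc : Continuous fun t : ℝ => Real.cos (x * t) := by fun_prop
  have ibp := intervalIntegral.integral_mul_deriv_eq_deriv_mul hu hv
    (hci.intervalIntegrable 0 T) (hcc.intervalIntegrable 0 T)
  have heq : (∫ t in (0:ℝ)..T, Real.cos (x * t) * Real.exp (-w ^ 2 * t ^ 2))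
      = ∫ t in (0:ℝ)..T, Real.exp (-w ^ 2 * t ^ 2) * Real.cos (x * t) := by
    apply intervalIntegral.integral_congr
    intro t _; ring
  rw [heq, ibp]
  have hzero : Real.exp (-w ^ 2 * 0 ^ 2) * (Real.sin (x * 0) / x) = 0 := by norm_num
  rw [hzero, sub_zero]
  have hb1 : |Real.exp (-w ^ 2 * T ^ 2) * (Real.sin (x * T) / x)| ≤ 1 / x := by
    rw [abs_mul, abs_div, _root_.abs_of_pos hx]
    have h1 : |Real.exp (-w ^ 2 * T ^ 2)| ≤ 1 := by
      rw [_root_.abs_of_pos (Real.exp_pos _)]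
      apply Real.exp_le_one_iff.mpr
      nlinarith [sq_nonneg (w * T)]
    have h2 : |Real.sin (x * T)| / x ≤ 1 / x := by
      gcongr
      exact abs_le.mpr ⟨Real.neg_one_le_sin _, Real.sin_le_one _⟩
    calc |Real.exp (-w ^ 2 * T ^ 2)| * (|Real.sin (x * T)| / x)
        ≤ 1 * (1 / x) := mul_le_mul h1 h2 (by positivity) zero_le_one
      _ = 1 / x := one_mul _
  have hgc : Continuous (fun t : ℝ => 2 * w ^ 2 * t * Real.exp (-w ^ 2 * t ^ 2) / x) := by
    fun_prop
  have hgval : (∫ t in (0:ℝ)..T, 2 * w ^ 2 * t * Real.exp (-w ^ 2 * t ^ 2) / x)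
      = (1 - Real.exp (-w ^ 2 * T ^ 2)) / x := by
    have hF : ∀ t ∈ uIcc (0:ℝ) T, HasDerivAt (fun t => -Real.exp (-w ^ 2 * t ^ 2) / x)
        (2 * w ^ 2 * t * Real.exp (-w ^ 2 * t ^ 2) / x) t := by
      intro t _
      have h1 : HasDerivAt (fun t : ℝ => -w ^ 2 * t ^ 2) (-w ^ 2 * (2 * t)) t := by
        simpa using ((hasDerivAt_pow 2 t).const_mul (-w ^ 2))
      have h2 := (Real.hasDerivAt_exp _).comp t h1
      have h3 := (h2.neg).div_const x
      exact h3.congr_deriv (by ring)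
    rw [intervalIntegral.integral_eq_sub_of_hasDerivAt hF (hgc.intervalIntegrable 0 T)]
    norm_num
    ring
  have hb2 : |∫ t in (0:ℝ)..T, -w ^ 2 * (2 * t) * Real.exp (-w ^ 2 * t ^ 2) *
      (Real.sin (x * t) / x)| ≤ 1 / x := by
    have hle := intervalIntegral.norm_integral_le_abs_of_norm_le (μ := volume) (a := 0) (b := T)
      (f := fun t => -w ^ 2 * (2 * t) * Real.exp (-w ^ 2 * t ^ 2) * (Real.sin (x * t) / x))
      (g := fun t => 2 * w ^ 2 * t * Real.exp (-w ^ 2 * t ^ 2) / x) ?_ (hgc.intervalIntegrable 0 T)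
    · refine hle.trans ?_
      rw [hgval, abs_div, _root_.abs_of_pos hx]
      have h1 : |1 - Real.exp (-w ^ 2 * T ^ 2)| ≤ 1 := by
        have he1 : Real.exp (-w ^ 2 * T ^ 2) ≤ 1 :=
          Real.exp_le_one_iff.mpr (by nlinarith [sq_nonneg (w * T)])
        have he0 : 0 < Real.exp (-w ^ 2 * T ^ 2) := Real.exp_pos _
        rw [abs_le]
        constructor <;> linarith
      gcongr
    · rw [uIoc_of_le hT]
      filter_upwards [ae_restrict_mem measurableSet_Ioc] with t ht
      have ht0 : 0 < t := ht.1
      rw [Real.norm_eq_abs, abs_mul, abs_mul, abs_div, _root_.abs_of_pos hx,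
        _root_.abs_of_pos (Real.exp_pos _)]
      have hsin : |Real.sin (x * t)| ≤ 1 := abs_le.mpr ⟨Real.neg_one_le_sin _, Real.sin_le_one _⟩
      have habs : |(-w ^ 2 * (2 * t))| = 2 * w ^ 2 * t := by
        rw [abs_mul, abs_neg, _root_.abs_of_nonneg (sq_nonneg w),
          _root_.abs_of_pos (by linarith : (0:ℝ) < 2 * t)]
        ring
      rw [habs]
      calc 2 * w ^ 2 * t * Real.exp (-w ^ 2 * t ^ 2) * (|Real.sin (x * t)| / x)
          ≤ 2 * w ^ 2 * t * Real.exp (-w ^ 2 * t ^ 2) * (1 / x) := by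
            gcongr
          _ = 2 * w ^ 2 * t * Real.exp (-w ^ 2 * t ^ 2) / x := by ring
  calc |Real.exp (-w ^ 2 * T ^ 2) * (Real.sin (x * T) / x) -
      ∫ t in (0:ℝ)..T, -w ^ 2 * (2 * t) * Real.exp (-w ^ 2 * t ^ 2) * (Real.sin (x * t) / x)|
      ≤ |Real.exp (-w ^ 2 * T ^ 2) * (Real.sin (x * T) / x)| +
        |∫ t in (0:ℝ)..T, -w ^ 2 * (2 * t) * Real.exp (-w ^ 2 * t ^ 2) * (Real.sin (x * t) / x)| :=
        abs_sub _ _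
    _ ≤ 1 / x + 1 / x := add_le_add hb1 hb2
    _ = 2 / x := by ring

lemma my_fubini_step (x : ℝ) {T : ℝ} (hT : 0 ≤ T) :
    (∫ t in (0:ℝ)..T, Real.cos (x * t) / Real.sqrt (t ^ 2 + 1))
      = ∫ w in Ioi (0:ℝ), (2 / Real.sqrt π) * Real.exp (-w ^ 2) *
          ∫ t in (0:ℝ)..T, Real.cos (x * t) * Real.exp (-w ^ 2 * t ^ 2) := by
  have hπ : Real.sqrt π ≠ 0 := by positivity
  have key : ∀ t : ℝ, Real.cos (x * t) / Real.sqrt (t ^ 2 + 1)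
      = ∫ w in Ioi (0:ℝ), (2 / Real.sqrt π) * (Real.cos (x * t) *
          Real.exp (-(t ^ 2 + 1) * w ^ 2)) := by
    intro t
    have h1 : (0:ℝ) < t ^ 2 + 1 := by positivity
    have h2 : Real.sqrt (t ^ 2 + 1) ≠ 0 := by positivity
    rw [integral_const_mul, integral_const_mul, integral_gaussian_Ioi,
      Real.sqrt_div Real.pi_pos.le]
    field_simp
  rw [intervalIntegral.integral_of_le hT]
  have step1 : (∫ t in Ioc (0:ℝ) T, Real.cos (x * t) / Real.sqrt (t ^ 2 + 1))
      = ∫ t in Ioc (0:ℝ) T, ∫ w in Ioi (0:ℝ), (2 / Real.sqrt π) * (Real.cos (x * t) *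
          Real.exp (-(t ^ 2 + 1) * w ^ 2)) := by
    exact setIntegral_congr_fun measurableSet_Ioc fun t _ => key t
  rw [step1]
  have hcont : Continuous (Function.uncurry fun (t w : ℝ) =>
      (2 / Real.sqrt π) * (Real.cos (x * t) * Real.exp (-(t ^ 2 + 1) * w ^ 2))) := by
    fun_prop
  have hInt : Integrable (Function.uncurry fun (t w : ℝ) =>
      (2 / Real.sqrt π) * (Real.cos (x * t) * Real.exp (-(t ^ 2 + 1) * w ^ 2)))
      ((volume.restrict (Ioc (0:ℝ) T)).prod (volume.restrict (Ioi (0:ℝ)))) := by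
    rw [integrable_prod_iff hcont.aestronglyMeasurable]
    constructor
    · filter_upwards with t
      have h1 : (0:ℝ) < t ^ 2 + 1 := by positivity
      exact (((integrable_exp_neg_mul_sq h1).integrableOn.const_mul
        (Real.cos (x * t))).const_mul (2 / Real.sqrt π))
    · have hnorm : ∀ t : ℝ, (∫ w in Ioi (0:ℝ), ‖(2 / Real.sqrt π) * (Real.cos (x * t) *
          Real.exp (-(t ^ 2 + 1) * w ^ 2))‖) = |Real.cos (x * t)| / Real.sqrt (t ^ 2 + 1) := by
        intro t
        have h1 : (0:ℝ) < t ^ 2 + 1 := by positivity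
        have h2 : Real.sqrt (t ^ 2 + 1) ≠ 0 := by positivity
        have : ∀ w : ℝ, ‖(2 / Real.sqrt π) * (Real.cos (x * t) *
            Real.exp (-(t ^ 2 + 1) * w ^ 2))‖ = (2 / Real.sqrt π) * (|Real.cos (x * t)| *
            Real.exp (-(t ^ 2 + 1) * w ^ 2)) := by
          intro w
          rw [Real.norm_eq_abs, abs_mul, abs_mul, _root_.abs_of_pos (by positivity :
            (0:ℝ) < 2 / Real.sqrt π), _root_.abs_of_pos (Real.exp_pos _)]
        simp_rw [this]
        rw [integral_const_mul, integral_const_mul, integral_gaussian_Ioi,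
          Real.sqrt_div Real.pi_pos.le]
        field_simp
      simp only [Function.uncurry_apply_pair]
      simp_rw [hnorm]
      apply (Continuous.integrableOn_Ioc ?_)
      apply Continuous.div (by fun_prop) (by fun_prop) fun t => by positivity
  have swap := integral_integral_swap (f := fun (t w : ℝ) =>
    (2 / Real.sqrt π) * (Real.cos (x * t) * Real.exp (-(t ^ 2 + 1) * w ^ 2))) hInt
  rw [swap]
  apply setIntegral_congr_fun measurableSet_Ioi
  intro w _
  dsimp only
  rw [intervalIntegral.integral_of_le hT, ← integral_const_mul]
  apply setIntegral_congr_fun measurableSet_Ioc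
  intro t _
  dsimp only
  rw [show -(t ^ 2 + 1) * w ^ 2 = -w ^ 2 + -w ^ 2 * t ^ 2 by ring, Real.exp_add]
  ring

lemma my_limit_step {x : ℝ} (hx : 0 < x) :
    Tendsto (fun T => ∫ w in Ioi (0:ℝ), (2 / Real.sqrt π) * Real.exp (-w ^ 2) *
        ∫ t in (0:ℝ)..T, Real.cos (x * t) * Real.exp (-w ^ 2 * t ^ 2)) atTop
      (nhds (∫ w in Ioi (0:ℝ), (1 / w) * Real.exp (-(w ^ 2 + x ^ 2 / (4 * w ^ 2))))) := by
  have hπ : Real.sqrt π ≠ 0 := by positivity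
  apply tendsto_integral_filter_of_dominated_convergence
    (bound := fun w => (2 / Real.sqrt π) * Real.exp (-w ^ 2) * (2 / x))
  · filter_upwards with T
    apply Continuous.aestronglyMeasurable
    apply Continuous.mul (by fun_prop)
    exact intervalIntegral.continuous_parametric_intervalIntegral_of_continuous'
      (f := fun (w t : ℝ) => Real.cos (x * t) * Real.exp (-w ^ 2 * t ^ 2)) (by fun_prop) 0 T
  · filter_upwards [eventually_ge_atTop (0:ℝ)] with T hT
    filter_upwards with w
    rw [Real.norm_eq_abs, abs_mul, _root_.abs_of_pos (show (0:ℝ) < 2 / Real.sqrt π *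
      Real.exp (-w ^ 2) by positivity)]
    apply mul_le_mul_of_nonneg_left (my_ibp_bound hx hT)
    positivity
  · apply Integrable.mul_const
    apply Integrable.const_mul
    exact (integrable_exp_neg_mul_sq one_pos).integrableOn.congr_fun
      (fun w _ => by norm_num) measurableSet_Ioi
  · filter_upwards [ae_restrict_mem measurableSet_Ioi] with w hw
    have hw0 : (0:ℝ) < w := hw
    have hw2 : (0:ℝ) < w ^ 2 := by positivity
    have hintg : IntegrableOn (fun t => Real.cos (x * t) * Real.exp (-w ^ 2 * t ^ 2))
        (Ioi (0:ℝ)) := by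
      apply Integrable.mono' (integrable_exp_neg_mul_sq hw2).integrableOn
        (by apply Continuous.aestronglyMeasurable; fun_prop)
      filter_upwards with t
      rw [Real.norm_eq_abs, abs_mul, _root_.abs_of_pos (Real.exp_pos _)]
      exact mul_le_of_le_one_left (Real.exp_pos _).le
        (abs_le.mpr ⟨Real.neg_one_le_cos _, Real.cos_le_one _⟩)
    have hlim := (intervalIntegral_tendsto_integral_Ioi 0 hintg tendsto_id).const_mul
      ((2 / Real.sqrt π) * Real.exp (-w ^ 2))
    have hval : (2 / Real.sqrt π) * Real.exp (-w ^ 2) *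
        ∫ t in Ioi (0:ℝ), Real.cos (x * t) * Real.exp (-w ^ 2 * t ^ 2)
        = (1 / w) * Real.exp (-(w ^ 2 + x ^ 2 / (4 * w ^ 2))) := by
      rw [my_cos_gauss_Ioi hw2 x]
      rw [Real.sqrt_div Real.pi_pos.le, Real.sqrt_sq hw0.le]
      rw [show -(w ^ 2 + x ^ 2 / (4 * w ^ 2)) = -w ^ 2 + -x ^ 2 / (4 * w ^ 2) by ring,
        Real.exp_add]
      field_simp
    rw [← hval]
    convert hlim using 2 with T
    rfl

lemma my_K0_rep (K0 : ℝ → ℝ)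
    (hK0 : ∀ x ∈ Ioi (0:ℝ),
      Tendsto (fun T => ∫ t in (0:ℝ)..T, Real.cos (x * t) / Real.sqrt (t ^ 2 + 1))
        atTop (nhds (K0 x)))
    {x : ℝ} (hx : 0 < x) :
    K0 x = ∫ w in Ioi (0:ℝ), (1 / w) * Real.exp (-(w ^ 2 + x ^ 2 / (4 * w ^ 2))) := by
  refine tendsto_nhds_unique (hK0 x hx) ?_
  apply (my_limit_step hx).congr'
  filter_upwards [eventually_ge_atTop (0:ℝ)] with T hT
  exact (my_fubini_step x hT).symm

lemma my_mellin_int {c s : ℝ} (hc : 0 < c) (hs : 0 < s) :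
    IntegrableOn (fun x : ℝ => x ^ (s - 1) * Real.exp (-(c * x ^ 2))) (Ioi (0:ℝ)) := by
  have := integrableOn_rpow_mul_exp_neg_mul_sq hc (show (-1:ℝ) < s - 1 by linarith)
  exact this.congr_fun (fun x _ => by simp only [neg_mul]) measurableSet_Ioi

lemma my_mellin_gauss {c s : ℝ} (hc : 0 < c) (hs : 0 < s) :
    ∫ x in Ioi (0:ℝ), x ^ (s - 1) * Real.exp (-(c * x ^ 2))
      = c ^ (-s / 2) * (1 / 2) * Real.Gamma (s / 2) := by
  have h := integral_rpow_mul_exp_neg_mul_rpow (p := 2) (q := s - 1) two_pos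
    (show (-1:ℝ) < s - 1 by linarith) hc
  have heq : (∫ x in Ioi (0:ℝ), x ^ (s - 1) * Real.exp (-(c * x ^ 2)))
      = ∫ x in Ioi (0:ℝ), x ^ (s - 1) * Real.exp (-c * x ^ (2:ℝ)) := by
    apply setIntegral_congr_fun measurableSet_Ioi
    intro x hx
    simp only [Real.rpow_two, neg_mul]
  rw [heq, h]
  norm_num

lemma my_cpow_aux {β s w : ℝ} (hβ : 0 < β) (hw : 0 < w) :
    (β ^ 2 / (4 * w ^ 2)) ^ (-s / 2 : ℝ) = 2 ^ s * β ^ (-s) * w ^ s := by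
  have ha : (0:ℝ) < β / (2 * w) := by positivity
  have h1 : β ^ 2 / (4 * w ^ 2) = (β / (2 * w)) ^ (2:ℕ) := by
    field_simp
    ring
  rw [h1, ← Real.rpow_natCast (β / (2 * w)) 2, ← Real.rpow_mul ha.le,
    show ((2:ℕ):ℝ) * (-s / 2) = -s by push_cast; ring]
  rw [Real.rpow_neg ha.le, Real.div_rpow hβ.le (by positivity),
    Real.mul_rpow (by norm_num) hw.le, Real.rpow_neg hβ.le]
  have h2 : (0:ℝ) < (2:ℝ) ^ s := Real.rpow_pos_of_pos two_pos s
  have h3 : (0:ℝ) < β ^ s := Real.rpow_pos_of_pos hβ s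
  have h4 : (0:ℝ) < w ^ s := Real.rpow_pos_of_pos hw s
  field_simp

theorem stmt_11 (K0 : ℝ → ℝ)
    (hK0 : ∀ x ∈ Ioi (0:ℝ),
      Tendsto (fun T => ∫ t in (0:ℝ)..T, Real.cos (x * t) / Real.sqrt (t ^ 2 + 1))
        atTop (nhds (K0 x)))
    (β s : ℝ) (hβ : 0 < β) (hs : 0 < s) :
    ∫ x in Ioi (0:ℝ), x ^ (s - 1) * K0 (β * x) =
      (2 : ℝ) ^ (s - 2) * β ^ (-s) * Real.Gamma (s / 2) ^ 2 := by
  set f : ℝ → ℝ → ℝ := fun x w =>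
    x ^ (s - 1) * ((1 / w) * Real.exp (-(w ^ 2 + (β * x) ^ 2 / (4 * w ^ 2)))) with hf
  set D : ℝ := Real.Gamma (s / 2) * 2 ^ (s - 1) * β ^ (-s) with hD
  have hpt : ∀ (x w : ℝ), f x w = ((1 / w) * Real.exp (-w ^ 2)) *
      (x ^ (s - 1) * Real.exp (-(β ^ 2 / (4 * w ^ 2) * x ^ 2))) := by
    intro x w
    rw [hf]
    dsimp only
    rw [show -(w ^ 2 + (β * x) ^ 2 / (4 * w ^ 2))
      = -w ^ 2 + -(β ^ 2 / (4 * w ^ 2) * x ^ 2) by ring, Real.exp_add]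
    ring
  have hinner : ∀ w : ℝ, 0 < w →
      (∫ x in Ioi (0:ℝ), f x w) = D * (w ^ (s - 1) * Real.exp (-w ^ 2)) := by
    intro w hw
    have hc : (0:ℝ) < β ^ 2 / (4 * w ^ 2) := by positivity
    simp_rw [hpt _ w]
    rw [integral_const_mul, my_mellin_gauss hc hs, my_cpow_aux hβ hw]
    rw [hD, Real.rpow_sub two_pos, Real.rpow_one,
      show w ^ (s - 1) = w ^ s / w from by rw [Real.rpow_sub hw, Real.rpow_one]]
    field_simp
  have hintx : ∀ w : ℝ, 0 < w → IntegrableOn (fun x => f x w) (Ioi (0:ℝ)) := by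
    intro w hw
    have hc : (0:ℝ) < β ^ 2 / (4 * w ^ 2) := by positivity
    have h2 : IntegrableOn (fun x : ℝ => (1 / w) * Real.exp (-w ^ 2) *
        (x ^ (s - 1) * Real.exp (-(β ^ 2 / (4 * w ^ 2) * x ^ 2)))) (Ioi (0:ℝ)) :=
      (my_mellin_int hc hs).const_mul ((1 / w) * Real.exp (-w ^ 2))
    exact h2.congr_fun (fun x _ => (hpt x w).symm) measurableSet_Ioi
  have hDint : IntegrableOn (fun w => D * (w ^ (s - 1) * Real.exp (-w ^ 2))) (Ioi (0:ℝ)) := by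
    have h1 : IntegrableOn (fun w : ℝ => w ^ (s - 1) * Real.exp (-(1 * w ^ 2))) (Ioi (0:ℝ)) :=
      my_mellin_int one_pos hs
    exact (h1.congr_fun (fun w _ => by norm_num) measurableSet_Ioi).const_mul D
  have hmeas : AEStronglyMeasurable (Function.uncurry f)
      ((volume.restrict (Ioi (0:ℝ))).prod (volume.restrict (Ioi (0:ℝ)))) := by
    apply Measurable.aestronglyMeasurable
    fun_prop
  have hprod : Integrable (Function.uncurry f)
      ((volume.restrict (Ioi (0:ℝ))).prod (volume.restrict (Ioi (0:ℝ)))) := by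
    rw [integrable_prod_iff' hmeas]
    constructor
    · filter_upwards [ae_restrict_mem measurableSet_Ioi] with w hw
      exact hintx w hw
    · apply hDint.congr
      filter_upwards [ae_restrict_mem measurableSet_Ioi] with w hw
      have hw0 : (0:ℝ) < w := hw
      have habs : (∫ x in Ioi (0:ℝ), ‖f x w‖) = ∫ x in Ioi (0:ℝ), f x w := by
        apply setIntegral_congr_fun measurableSet_Ioi
        intro x hx
        have hx0 : (0:ℝ) < x := hx
        dsimp only
        rw [Real.norm_eq_abs, _root_.abs_of_nonneg]
        rw [hf]
        dsimp only
        positivity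
      simp only [Function.uncurry_apply_pair]
      rw [habs]
      exact (hinner w hw).symm
  have step1 : (∫ x in Ioi (0:ℝ), x ^ (s - 1) * K0 (β * x))
      = ∫ x in Ioi (0:ℝ), ∫ w in Ioi (0:ℝ), f x w := by
    apply setIntegral_congr_fun measurableSet_Ioi
    intro x hx
    have hx0 : (0:ℝ) < x := hx
    dsimp only
    rw [my_K0_rep K0 hK0 (mul_pos hβ hx0), ← integral_const_mul]
  rw [step1, integral_integral_swap hprod]
  have step2 : (∫ w in Ioi (0:ℝ), ∫ x in Ioi (0:ℝ), f x w)
      = ∫ w in Ioi (0:ℝ), D * (w ^ (s - 1) * Real.exp (-w ^ 2)) := by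
    apply setIntegral_congr_fun measurableSet_Ioi
    intro w hw
    exact hinner w hw
  rw [step2, integral_const_mul]
  have step3 : (∫ w in Ioi (0:ℝ), w ^ (s - 1) * Real.exp (-w ^ 2))
      = (1:ℝ) ^ (-s / 2) * (1 / 2) * Real.Gamma (s / 2) := by
    rw [← my_mellin_gauss one_pos hs]
    apply setIntegral_congr_fun measurableSet_Ioi
    intro w hw
    dsimp only
    norm_num
  rw [step3, Real.one_rpow, hD,
    show (2:ℝ) ^ (s - 1) = 2 ^ (s - 2) * 2 from by
      rw [← Real.rpow_add_one two_ne_zero (s - 2)]; ring_nf]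
  ring
end

section
/- Let a and b be real numbers with 0 ≤ a < b. Then ∫_0^∞ e^{−a x} K₀(b x) dx = arccos(a/b)/√(b² − a²). -/
open MeasureTheory Filter Set
open Topology

namespace K0aux
noncomputable def s (t : ℝ) : ℝ := Real.sqrt (t^2+1)
lemma sq_pos (t : ℝ) : (0:ℝ) < t^2+1 := by positivity
lemma s_pos (t : ℝ) : 0 < s t := Real.sqrt_pos.2 (sq_pos t)
lemma s_sq (t : ℝ) : s t ^ 2 = t^2+1 := Real.sq_sqrt (sq_pos t).le
lemma one_le_s (t : ℝ) : 1 ≤ s t := by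
  rw [show (1:ℝ) = Real.sqrt 1 by simp]
  exact Real.sqrt_le_sqrt (by nlinarith)
lemma abs_le_s (t : ℝ) : |t| ≤ s t := by
  rw [show |t| = Real.sqrt (t^2) by rw [Real.sqrt_sq_eq_abs]]
  exact Real.sqrt_le_sqrt (by nlinarith)
lemma le_s (t : ℝ) : t ≤ s t := (le_abs_self t).trans (abs_le_s t)

noncomputable def u (t : ℝ) : ℝ := (s t)⁻¹
noncomputable def w (t : ℝ) : ℝ := t / s t ^ 3
noncomputable def w2 (t : ℝ) : ℝ := (1 - 2*t^2) / s t ^ 5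
noncomputable def p3 (t : ℝ) : ℝ := t / s t

lemma continuous_s : Continuous s :=
  Real.continuous_sqrt.comp ((continuous_pow 2).add continuous_const)
lemma continuous_u : Continuous u :=
  continuous_s.inv₀ (fun t => (s_pos t).ne')
lemma continuous_w : Continuous w :=
  continuous_id.div (continuous_s.pow 3) (fun t => pow_ne_zero 3 (s_pos t).ne')
lemma continuous_w2 : Continuous w2 :=
  (continuous_const.sub (continuous_const.mul (continuous_pow 2))).div (continuous_s.pow 5)
    (fun t => by have := s_pos t; positivity)


lemma e3 (t : ℝ) : s t ^ 3 = (t^2+1) * s t := by rw [← s_sq t]; ring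
lemma e5 (t : ℝ) : s t ^ 5 = (t^2+1)^2 * s t := by rw [← s_sq t]; ring
lemma e7 (t : ℝ) : s t ^ 7 = (t^2+1)^3 * s t := by rw [← s_sq t]; ring
lemma e9 (t : ℝ) : s t ^ 9 = (t^2+1)^4 * s t := by rw [← s_sq t]; ring
lemma e4 (t : ℝ) : s t ^ 4 = (t^2+1)^2 := by rw [← s_sq t]; ring
lemma e6 (t : ℝ) : s t ^ 6 = (t^2+1)^3 := by rw [← s_sq t]; ring
lemma e8 (t : ℝ) : s t ^ 8 = (t^2+1)^4 := by rw [← s_sq t]; ring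

lemma hasDerivAt_s (t : ℝ) : HasDerivAt s (t / s t) t := by
  have h : HasDerivAt (fun t : ℝ => t^2+1) (2*t) t := by
    simpa using (hasDerivAt_pow 2 t).add_const 1
  have := h.sqrt (sq_pos t).ne'
  refine this.congr_deriv ?_
  rw [show Real.sqrt (t^2+1) = s t from rfl]
  field_simp [s]

lemma hasDerivAt_u (t : ℝ) : HasDerivAt u (-(w t)) t := by
  have := (hasDerivAt_s t).inv (s_pos t).ne'
  refine this.congr_deriv ?_
  have hs := (s_pos t).ne'
  rw [w]
  field_simp

lemma hasDerivAt_w (t : ℝ) : HasDerivAt w (w2 t) t := by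
  have h3 : HasDerivAt (fun t => s t ^ 3) (3 * s t ^ 2 * (t / s t)) t := by
    have h := (hasDerivAt_s t).pow 3; simp at h; exact h
  have h := (hasDerivAt_id t).div h3 (by have := s_pos t; positivity)
  refine h.congr_deriv ?_
  have hs := (s_pos t).ne'
  have hsq := s_sq t
  simp only [id, w2]
  field_simp
  ring_nf
  simp only [e9, e8, e7, e6, e5, e4, e3, s_sq]
  ring

lemma hasDerivAt_p3 (t : ℝ) : HasDerivAt p3 ((s t ^ 3)⁻¹) t := by
  have h := (hasDerivAt_id t).div (hasDerivAt_s t) (s_pos t).ne'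
  refine h.congr_deriv ?_
  have hs := (s_pos t).ne'
  have hsq := s_sq t
  simp only [id]
  field_simp
  ring_nf
  simp only [e9, e8, e7, e6, e5, e4, e3, s_sq]
  ring



lemma hasDerivAt_sinx (x : ℝ) (hx : x ≠ 0) (t : ℝ) :
    HasDerivAt (fun t => Real.sin (x*t) / x) (Real.cos (x*t)) t := by
  have h1 : HasDerivAt (fun t : ℝ => x * t) x t := by
    simpa using (hasDerivAt_id t).const_mul x
  have h2 := (Real.hasDerivAt_sin (x*t)).comp t h1
  have := h2.div_const x
  refine this.congr_deriv ?_
  field_simp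

lemma hasDerivAt_cosx (x : ℝ) (hx : x ≠ 0) (t : ℝ) :
    HasDerivAt (fun t => -(Real.cos (x*t) / x^2)) (Real.sin (x*t) / x) t := by
  have h1 : HasDerivAt (fun t : ℝ => x * t) x t := by
    simpa using (hasDerivAt_id t).const_mul x
  have h2 := (Real.hasDerivAt_cos (x*t)).comp t h1
  have := (h2.div_const (x^2)).neg
  refine this.congr_deriv ?_
  field_simp

lemma ibp1 (x : ℝ) (hx : x ≠ 0) (A B : ℝ) :
    ∫ t in A..B, Real.cos (x*t) / s t
      = u B * (Real.sin (x*B)/x) - u A * (Real.sin (x*A)/x)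
        + ∫ t in A..B, w t * (Real.sin (x*t)/x) := by
  have key := intervalIntegral.integral_mul_deriv_eq_deriv_mul
    (a := A) (b := B) (u := u) (v := fun t => Real.sin (x*t)/x)
    (u' := fun t => -(w t)) (v' := fun t => Real.cos (x*t))
    (fun t _ => hasDerivAt_u t) (fun t _ => hasDerivAt_sinx x hx t)
    (continuous_w.neg.intervalIntegrable A B)
    ((Real.continuous_cos.comp (continuous_const.mul continuous_id)).intervalIntegrable A B)
  have h1 : (fun t => Real.cos (x*t) / s t) = fun t => u t * Real.cos (x*t) := by
    funext t; rw [u, div_eq_mul_inv, mul_comm]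
  rw [h1, key]
  have h2 : ∀ t, -(w t) * (Real.sin (x*t)/x) = -(w t * (Real.sin (x*t)/x)) := by
    intro t; ring
  simp only [h2, intervalIntegral.integral_neg]
  ring

lemma ibp2 (x : ℝ) (hx : x ≠ 0) (A B : ℝ) :
    ∫ t in A..B, w t * (Real.sin (x*t)/x)
      = w A * Real.cos (x*A)/x^2 - w B * Real.cos (x*B)/x^2
        + (1/x^2) * ∫ t in A..B, w2 t * Real.cos (x*t) := by
  have key := intervalIntegral.integral_mul_deriv_eq_deriv_mul
    (a := A) (b := B) (u := w) (v := fun t => -(Real.cos (x*t)/x^2))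
    (u' := w2) (v' := fun t => Real.sin (x*t)/x)
    (fun t _ => hasDerivAt_w t) (fun t _ => hasDerivAt_cosx x hx t)
    (continuous_w2.intervalIntegrable A B)
    (((Real.continuous_sin.comp (continuous_const.mul continuous_id)).div_const x).intervalIntegrable A B)
  rw [key]
  have h2 : ∀ t, w2 t * -(Real.cos (x*t)/x^2) = (-(1/x^2)) * (w2 t * Real.cos (x*t)) := by
    intro t; ring
  simp only [h2, intervalIntegral.integral_const_mul]
  ring

lemma rep (x : ℝ) (hx : x ≠ 0) (T : ℝ) :
    ∫ t in (0:ℝ)..T, Real.cos (x*t) / s t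
      = u T * (Real.sin (x*T)/x) - w T * Real.cos (x*T)/x^2
        + (1/x^2) * ∫ t in (0:ℝ)..T, w2 t * Real.cos (x*t) := by
  rw [ibp1 x hx 0 T, ibp2 x hx 0 T]
  simp [w]
  ring

lemma continuous_cosdiv (x : ℝ) : Continuous (fun t => Real.cos (x*t) / s t) :=
  (Real.continuous_cos.comp (continuous_const.mul continuous_id)).div continuous_s
    (fun t => (s_pos t).ne')

lemma u_nonneg (t : ℝ) : 0 ≤ u t := (inv_pos.2 (s_pos t)).le

lemma u_le_one (t : ℝ) : u t ≤ 1 := by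
  rw [u]
  exact inv_le_one_of_one_le₀ (one_le_s t)

lemma u_anti {A T : ℝ} (hA : 0 ≤ A) (hAT : A ≤ T) : u T ≤ u A := by
  rw [u, u]
  apply inv_anti₀ (s_pos A)
  rw [s, s]
  exact Real.sqrt_le_sqrt (by nlinarith)

lemma u_le_inv {A : ℝ} (hA : 0 < A) : u A ≤ A⁻¹ := by
  rw [u]
  exact inv_anti₀ hA (le_s A)

lemma abs_w_le_u (t : ℝ) : |w t| ≤ u t := by
  have hs := s_pos t
  rw [w, u, abs_div, abs_pow, abs_of_pos hs, div_le_iff₀ (pow_pos hs 3)]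
  have h2 : (s t)⁻¹ * s t ^ 3 = s t ^ 2 := by field_simp
  rw [h2, s_sq]
  nlinarith [sq_nonneg (|t| - 1), sq_abs t, abs_nonneg t]

lemma w_nonneg {t : ℝ} (ht : 0 ≤ t) : 0 ≤ w t := by
  rw [w]; have := s_pos t; positivity

lemma abs_w2_le (t : ℝ) : |w2 t| ≤ 2 * (s t ^ 3)⁻¹ := by
  have hs := s_pos t
  rw [w2, abs_div, abs_pow, abs_of_pos hs, div_le_iff₀ (pow_pos hs 5)]
  have h2 : 2 * (s t ^ 3)⁻¹ * s t ^ 5 = 2 * s t ^ 2 := by field_simp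
  rw [h2, s_sq]
  rw [abs_le]; constructor <;> nlinarith [sq_nonneg t]

-- trivial bound
lemma triv_bound (x : ℝ) {A B : ℝ} (hAB : A ≤ B) :
    |∫ t in A..B, Real.cos (x*t) / s t| ≤ B - A := by
  have h := intervalIntegral.norm_integral_le_of_norm_le_const (C := 1)
    (f := fun t => Real.cos (x*t) / s t) (a := A) (b := B) ?_
  · rw [Real.norm_eq_abs] at h
    calc |∫ t in A..B, Real.cos (x*t) / s t| ≤ 1 * |B - A| := h
      _ = B - A := by rw [one_mul, abs_of_nonneg (by linarith)]
  · intro t _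
    rw [Real.norm_eq_abs, abs_div, abs_of_pos (s_pos t)]
    rw [div_le_one (s_pos t)]
    exact (Real.abs_cos_le_one _).trans (one_le_s t)

-- bound on the w2 integral
lemma w2_int_bound (x : ℝ) {T : ℝ} (hT : 0 ≤ T) :
    |∫ t in (0:ℝ)..T, w2 t * Real.cos (x*t)| ≤ 2 := by
  have h1 : |∫ t in (0:ℝ)..T, w2 t * Real.cos (x*t)|
      ≤ ∫ t in (0:ℝ)..T, |w2 t * Real.cos (x*t)| :=
    intervalIntegral.abs_integral_le_integral_abs hT
  have h2 : (∫ t in (0:ℝ)..T, |w2 t * Real.cos (x*t)|)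
      ≤ ∫ t in (0:ℝ)..T, 2 * (s t ^ 3)⁻¹ := by
    apply intervalIntegral.integral_mono_on hT
    · exact ((continuous_w2.mul (Real.continuous_cos.comp
        (continuous_const.mul continuous_id))).abs).intervalIntegrable 0 T
    · exact (continuous_const.mul ((continuous_s.pow 3).inv₀
        (fun t => pow_ne_zero 3 (s_pos t).ne'))).intervalIntegrable 0 T
    · intro t _
      rw [abs_mul]
      calc |w2 t| * |Real.cos (x*t)| ≤ |w2 t| * 1 :=
            mul_le_mul_of_nonneg_left (Real.abs_cos_le_one _) (abs_nonneg _)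
        _ = |w2 t| := mul_one _
        _ ≤ 2 * (s t ^ 3)⁻¹ := abs_w2_le t
  have h3 : (∫ t in (0:ℝ)..T, 2 * (s t ^ 3)⁻¹) = 2 * (p3 T - p3 0) := by
    rw [intervalIntegral.integral_const_mul]
    rw [intervalIntegral.integral_eq_sub_of_hasDerivAt (fun t _ => hasDerivAt_p3 t)]
    exact ((continuous_s.pow 3).inv₀
      (fun t => pow_ne_zero 3 (s_pos t).ne')).intervalIntegrable 0 T
  have h4 : p3 T - p3 0 ≤ 1 := by
    rw [p3, p3]
    simp only [zero_div, sub_zero]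
    rw [div_le_one (s_pos T)]
    exact le_s T
  linarith [abs_nonneg (∫ t in (0:ℝ)..T, w2 t * Real.cos (x*t))]

lemma tail_bound (x : ℝ) (hx : 0 < x) {A T : ℝ} (hA : 0 < A) (hAT : A ≤ T) :
    |∫ t in A..T, Real.cos (x*t) / s t| ≤ 3 * u A / x := by
  rw [ibp1 x hx.ne' A T]
  have b1 : |u T * (Real.sin (x*T)/x)| ≤ u A / x := by
    rw [abs_mul, abs_div, abs_of_pos hx, abs_of_nonneg (u_nonneg T)]
    have h1 : u T ≤ u A := u_anti hA.le hAT
    have h2 : |Real.sin (x*T)| ≤ 1 := Real.abs_sin_le_one _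
    have h0 := u_nonneg T
    rw [show u T * (|Real.sin (x*T)| / x) = u T * |Real.sin (x*T)| / x by ring]
    gcongr
    nlinarith
  have b2 : |u A * (Real.sin (x*A)/x)| ≤ u A / x := by
    rw [abs_mul, abs_div, abs_of_pos hx, abs_of_nonneg (u_nonneg A)]
    have h2 : |Real.sin (x*A)| ≤ 1 := Real.abs_sin_le_one _
    have h0 := u_nonneg A
    rw [show u A * (|Real.sin (x*A)| / x) = u A * |Real.sin (x*A)| / x by ring]
    gcongr
    nlinarith
  have b3 : |∫ t in A..T, w t * (Real.sin (x*t)/x)| ≤ u A / x := by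
    have h1 : |∫ t in A..T, w t * (Real.sin (x*t)/x)|
        ≤ ∫ t in A..T, |w t * (Real.sin (x*t)/x)| :=
      intervalIntegral.abs_integral_le_integral_abs hAT
    have h2 : (∫ t in A..T, |w t * (Real.sin (x*t)/x)|)
        ≤ ∫ t in A..T, w t * (1/x) := by
      apply intervalIntegral.integral_mono_on hAT
      · exact ((continuous_w.mul ((Real.continuous_sin.comp
          (continuous_const.mul continuous_id)).div_const x)).abs).intervalIntegrable A T
      · exact (continuous_w.mul continuous_const).intervalIntegrable A T
      · intro t ht
        have hwt : 0 ≤ w t := w_nonneg (hA.le.trans ht.1)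
        rw [abs_mul, abs_of_nonneg hwt, abs_div, abs_of_pos hx]
        apply mul_le_mul_of_nonneg_left _ hwt
        rw [div_le_div_iff₀ hx hx]
        nlinarith [Real.abs_sin_le_one (x*t)]
    have h3 : (∫ t in A..T, w t * (1/x)) = (u A - u T) * (1/x) := by
      rw [intervalIntegral.integral_mul_const]
      congr 1
      have := intervalIntegral.integral_eq_sub_of_hasDerivAt
        (f := fun t => -(u t)) (f' := w) (a := A) (b := T)
        (fun t _ => by have h := (hasDerivAt_u t).neg; simp at h; exact h)
        (continuous_w.intervalIntegrable A T)
      rw [this]; ring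
    have h4 : (u A - u T) * (1/x) ≤ u A / x := by
      have h5 := u_nonneg T
      rw [show u A / x = u A * (1/x) by ring]
      have h6 : (0:ℝ) ≤ 1/x := by positivity
      have h5 := u_nonneg T
      nlinarith
    linarith
  calc |u T * (Real.sin (x*T)/x) - u A * (Real.sin (x*A)/x)
        + ∫ t in A..T, w t * (Real.sin (x*t)/x)|
      ≤ |u T * (Real.sin (x*T)/x) - u A * (Real.sin (x*A)/x)|
        + |∫ t in A..T, w t * (Real.sin (x*t)/x)| := abs_add_le _ _
    _ ≤ |u T * (Real.sin (x*T)/x)| + |u A * (Real.sin (x*A)/x)|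
        + |∫ t in A..T, w t * (Real.sin (x*t)/x)| := by
        have := abs_sub (u T * (Real.sin (x*T)/x)) (u A * (Real.sin (x*A)/x))
        linarith [abs_sub_abs_le_abs_sub (u T * (Real.sin (x*T)/x)) (u A * (Real.sin (x*A)/x)),
          abs_sub (u T * (Real.sin (x*T)/x)) (u A * (Real.sin (x*A)/x))]
    _ ≤ u A / x + u A / x + u A / x := by linarith
    _ = 3 * u A / x := by ring

lemma uniform_bound (x : ℝ) (hx : 0 < x) {T : ℝ} (hT : 0 ≤ T) :
    |∫ t in (0:ℝ)..T, Real.cos (x*t) / s t| ≤ 4 / Real.sqrt x := by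
  have hsx : 0 < Real.sqrt x := Real.sqrt_pos.2 hx
  set A : ℝ := (Real.sqrt x)⁻¹ with hAdef
  have hA : 0 < A := inv_pos.2 hsx
  have hAinv : A⁻¹ = Real.sqrt x := by rw [hAdef, inv_inv]
  have hxsq : Real.sqrt x * Real.sqrt x = x := Real.mul_self_sqrt hx.le
  rcases le_total T A with h | h
  · have := triv_bound x hT
    have h2 : T - 0 ≤ A := by linarith
    have h3 : A ≤ 4 / Real.sqrt x := by
      rw [hAdef, div_eq_mul_inv]
      nlinarith [inv_pos.2 hsx]
    linarith
  · rw [← intervalIntegral.integral_add_adjacent_intervals (a := (0:ℝ)) (b := A) (c := T)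
      ((continuous_cosdiv x).intervalIntegrable 0 A)
      ((continuous_cosdiv x).intervalIntegrable A T)]
    have b1 : |∫ t in (0:ℝ)..A, Real.cos (x*t) / s t| ≤ A := by
      have := triv_bound x hA.le
      linarith
    have b2 : |∫ t in A..T, Real.cos (x*t) / s t| ≤ 3 * u A / x := tail_bound x hx hA h
    have b3 : 3 * u A / x ≤ 3 / Real.sqrt x := by
      have h1 : u A ≤ A⁻¹ := u_le_inv hA
      rw [hAinv] at h1
      rw [div_le_div_iff₀ hx hsx]
      have := u_nonneg A
      nlinarith
    have h4 : A = 1 / Real.sqrt x := by rw [hAdef, one_div]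
    calc |(∫ t in (0:ℝ)..A, Real.cos (x*t) / s t) + ∫ t in A..T, Real.cos (x*t) / s t|
        ≤ |∫ t in (0:ℝ)..A, Real.cos (x*t) / s t| + |∫ t in A..T, Real.cos (x*t) / s t| :=
          abs_add_le _ _
      _ ≤ A + 3 / Real.sqrt x := by linarith
      _ = 4 / Real.sqrt x := by rw [h4]; ring

lemma tendsto_u : Tendsto u atTop (𝓝 0) := by
  apply squeeze_zero_norm' _ tendsto_inv_atTop_zero
  filter_upwards [eventually_gt_atTop (0:ℝ)] with t ht
  rw [Real.norm_eq_abs, abs_of_nonneg (u_nonneg t)]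
  exact u_le_inv ht

lemma lim_bound {x L : ℝ} (hx : 0 < x)
    (hL : Tendsto (fun T => ∫ t in (0:ℝ)..T, Real.cos (x*t) / s t) atTop (𝓝 L)) :
    |L| ≤ 4 / Real.sqrt x ∧ |L| ≤ 2 / x^2 := by
  constructor
  · apply le_of_tendsto hL.abs
    filter_upwards [eventually_ge_atTop (0:ℝ)] with T hT using uniform_bound x hx hT
  · have t1 : Tendsto (fun T => u T * (Real.sin (x*T)/x)) atTop (𝓝 0) := by
      have hb : ∀ T, ‖u T * (Real.sin (x*T)/x)‖ ≤ u T / x := by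
        intro T
        rw [Real.norm_eq_abs, abs_mul, abs_div, abs_of_pos hx, abs_of_nonneg (u_nonneg T),
          show u T * (|Real.sin (x*T)| / x) = u T * |Real.sin (x*T)| / x by ring]
        gcongr
        nlinarith [Real.abs_sin_le_one (x*T), u_nonneg T]
      exact squeeze_zero_norm hb (by simpa using tendsto_u.div_const x)
    have t2 : Tendsto (fun T => w T * Real.cos (x*T)/x^2) atTop (𝓝 0) := by
      have hb : ∀ T, ‖w T * Real.cos (x*T)/x^2‖ ≤ u T / x^2 := by
        intro T
        rw [Real.norm_eq_abs, abs_div, abs_mul, abs_of_pos (pow_pos hx 2)]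
        gcongr
        nlinarith [abs_w_le_u T, Real.abs_cos_le_one (x*T), abs_nonneg (w T),
          abs_nonneg (Real.cos (x*T))]
      exact squeeze_zero_norm hb (by simpa using tendsto_u.div_const (x^2))
    have hc : Tendsto (fun T => (1/x^2) * ∫ t in (0:ℝ)..T, w2 t * Real.cos (x*t))
        atTop (𝓝 L) := by
      have h := (hL.sub t1).add t2
      rw [sub_zero, add_zero] at h
      apply h.congr
      intro T
      rw [rep x hx.ne' T]
      ring
    apply le_of_tendsto hc.abs
    filter_upwards [eventually_ge_atTop (0:ℝ)] with T hT
    rw [abs_mul, abs_div, abs_one, abs_of_pos (pow_pos hx 2)]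
    have h8 := w2_int_bound x hT
    calc 1/x^2 * |∫ t in (0:ℝ)..T, w2 t * Real.cos (x*t)| ≤ 1/x^2 * 2 := by gcongr
      _ = 2/x^2 := by ring

lemma exp_deriv_aux (a : ℝ) (x : ℝ) :
    HasDerivAt (fun x => Real.exp (-(a*x))) (-a * Real.exp (-(a*x))) x := by
  have h1 : HasDerivAt (fun x : ℝ => -(a*x)) (-a) x := by
    have h := ((hasDerivAt_id x).const_mul a).neg; simp at h; exact h
  exact ((Real.hasDerivAt_exp (-(a*x))).comp x h1).congr_deriv (g' := -a * Real.exp (-(a*x))) (by ring)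

lemma tendsto_exp_neg (a : ℝ) (ha : 0 < a) :
    Tendsto (fun x => Real.exp (-(a*x))) atTop (𝓝 0) := by
  have h1 : Tendsto (fun x : ℝ => -(a*x)) atTop atBot := by
    have := (tendsto_id (α := ℝ)).const_mul_atTop ha
    exact tendsto_neg_atTop_atBot.comp this
  exact Real.tendsto_exp_atBot.comp h1

lemma laplace_cos {a : ℝ} (ha : 0 < a) (c : ℝ) :
    ∫ x in Ioi (0:ℝ), Real.exp (-(a*x)) * Real.cos (c*x) = a / (a^2 + c^2) := by
  have hden : (0:ℝ) < a^2 + c^2 := by positivity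
  set H : ℝ → ℝ :=
    fun x => Real.exp (-(a*x)) * (c * Real.sin (c*x) - a * Real.cos (c*x)) / (a^2+c^2) with hH
  have hderiv : ∀ x ∈ Ici (0:ℝ), HasDerivAt H (Real.exp (-(a*x)) * Real.cos (c*x)) x := by
    intro x _
    have h1 := exp_deriv_aux a x
    have hsin : HasDerivAt (fun x => Real.sin (c*x)) (c * Real.cos (c*x)) x := by
      have hc1 : HasDerivAt (fun x : ℝ => c*x) c x := by simpa using (hasDerivAt_id x).const_mul c
      exact ((Real.hasDerivAt_sin (c*x)).comp x hc1).congr_deriv (by ring)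
    have hcos : HasDerivAt (fun x => Real.cos (c*x)) (-(c * Real.sin (c*x))) x := by
      have hc1 : HasDerivAt (fun x : ℝ => c*x) c x := by simpa using (hasDerivAt_id x).const_mul c
      have := (Real.hasDerivAt_cos (c*x)).comp x hc1
      exact this.congr_deriv (by ring)
    have h2 : HasDerivAt (fun x => c * Real.sin (c*x) - a * Real.cos (c*x))
        (c * (c * Real.cos (c*x)) - a * (-(c * Real.sin (c*x)))) x :=
      ((hsin.const_mul c).sub (hcos.const_mul a))
    have h3 := (h1.mul h2).div_const (a^2+c^2)
    refine h3.congr_deriv ?_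
    field_simp
    ring
  have hint : IntegrableOn (fun x => Real.exp (-(a*x)) * Real.cos (c*x)) (Ioi (0:ℝ)) := by
    apply ((exp_neg_integrableOn_Ioi 0 ha).congr_fun (fun x _ => by beta_reduce; rw [neg_mul]) measurableSet_Ioi).mono'
    · exact (((Real.continuous_exp.comp (continuous_const.mul continuous_id).neg).mul
        (Real.continuous_cos.comp (continuous_const.mul continuous_id))).aestronglyMeasurable)
    · filter_upwards with x
      rw [Real.norm_eq_abs, abs_mul, Real.abs_exp]
      nlinarith [Real.abs_cos_le_one (c*x), Real.exp_pos (-(a*x)), abs_nonneg (Real.cos (c*x))]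
  have hlim : Tendsto H atTop (𝓝 0) := by
    have hb : ∀ x, ‖H x‖ ≤ Real.exp (-(a*x)) * ((|c| + |a|) / (a^2+c^2)) := by
      intro x
      rw [hH, Real.norm_eq_abs]
      simp only [abs_div, abs_mul, Real.abs_exp, abs_of_pos hden]
      rw [div_le_iff₀ hden, mul_assoc, div_mul_cancel₀ _ hden.ne']
      apply mul_le_mul_of_nonneg_left _ (Real.exp_pos _).le
      calc |c * Real.sin (c*x) - a * Real.cos (c*x)|
          ≤ |c * Real.sin (c*x)| + |a * Real.cos (c*x)| := abs_sub _ _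
        _ ≤ |c| + |a| := by
            rw [abs_mul, abs_mul]
            have := Real.abs_sin_le_one (c*x)
            have := Real.abs_cos_le_one (c*x)
            nlinarith [abs_nonneg c, abs_nonneg a, Real.abs_sin_le_one (c*x),
              Real.abs_cos_le_one (c*x), abs_nonneg (Real.sin (c*x)), abs_nonneg (Real.cos (c*x))]
    have h0 := (tendsto_exp_neg a ha).mul_const ((|c| + |a|) / (a^2+c^2))
    rw [zero_mul] at h0
    exact squeeze_zero_norm hb h0
  rw [MeasureTheory.integral_Ioi_of_hasDerivAt_of_tendsto' hderiv hint hlim]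
  rw [hH]
  simp [Real.sin_zero, Real.cos_zero]
  field_simp

section Tint
variable {a b : ℝ}

lemma p3_eq (t : ℝ) (ht : 0 < t) : p3 t = (Real.sqrt ((t⁻¹)^2+1))⁻¹ := by
  rw [p3, s]
  rw [show (t⁻¹)^2+1 = (t^2+1)/t^2 by field_simp; ring]
  rw [Real.sqrt_div (by positivity) (t^2)]
  rw [Real.sqrt_sq ht.le]
  field_simp

lemma tendsto_p3 : Tendsto p3 atTop (𝓝 1) := by
  have h1 : Tendsto (fun t : ℝ => (Real.sqrt ((t⁻¹)^2+1))⁻¹) atTop (𝓝 1) := by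
    have hc : Continuous (fun y : ℝ => (Real.sqrt (y^2+1))⁻¹) := continuous_u
    have h2 := (hc.tendsto 0).comp tendsto_inv_atTop_zero
    norm_num at h2
    exact h2
  apply h1.congr'
  filter_upwards [eventually_gt_atTop (0:ℝ)] with t ht
  exact (p3_eq t ht).symm

lemma G_deriv (ha : 0 < a) (hab : a < b) (t : ℝ) :
    HasDerivAt (fun t => Real.arctan (Real.sqrt (b^2-a^2) * t / (a * s t))
        / (a * Real.sqrt (b^2-a^2)))
      (a⁻¹ * (a * ((a^2 + b^2*t^2) * s t)⁻¹)) t := by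
  set c := Real.sqrt (b^2-a^2) with hcdef
  have hba : (0:ℝ) < b^2-a^2 := by nlinarith
  have hc : 0 < c := Real.sqrt_pos.2 hba
  have hc2 : c^2 = b^2-a^2 := Real.sq_sqrt hba.le
  have hs := s_pos t
  have hsq := s_sq t
  have hfun : (fun t => c * t / (a * s t)) = fun t => (c/a) * p3 t := by
    funext t
    have := (s_pos t).ne'
    rw [p3]
    field_simp
  have hin : HasDerivAt (fun t => c * t / (a * s t)) ((c/a) * (s t ^3)⁻¹) t := by
    rw [hfun]
    exact (hasDerivAt_p3 t).const_mul (c/a)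
  have harc := (Real.hasDerivAt_arctan (c * t / (a * s t))).comp t hin
  have hfin := harc.div_const (a * c)
  refine hfin.congr_deriv ?_
  have key : 1 + (c * t / (a * s t))^2 = (a^2 + b^2*t^2) / (a^2 * s t ^2) := by
    field_simp
    linear_combination t^2 * hc2 + a^2 * hsq
  rw [key]
  field_simp
  try simp only [e9, e8, e7, e6, e5, e4, e3, s_sq]
  try ring

lemma G_zero (ha : 0 < a) (hab : a < b) :
    Real.arctan (Real.sqrt (b^2-a^2) * 0 / (a * s 0)) / (a * Real.sqrt (b^2-a^2)) = 0 := by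
  simp

lemma G_lim (ha : 0 < a) (hab : a < b) :
    Tendsto (fun t => Real.arctan (Real.sqrt (b^2-a^2) * t / (a * s t))
        / (a * Real.sqrt (b^2-a^2))) atTop
      (𝓝 (Real.arctan (Real.sqrt (b^2-a^2) / a) / (a * Real.sqrt (b^2-a^2)))) := by
  set c := Real.sqrt (b^2-a^2) with hcdef
  have hfun : (fun t => c * t / (a * s t)) = fun t => (c/a) * p3 t := by
    funext t
    have := (s_pos t).ne'
    rw [p3]; field_simp
  have h1 : Tendsto (fun t => c * t / (a * s t)) atTop (𝓝 (c/a)) := by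
    rw [hfun]
    simpa using tendsto_p3.const_mul (c/a)
  exact ((Real.continuous_arctan.tendsto _).comp h1).div_const _

lemma integrand_nonneg (ha : 0 < a) (t : ℝ) :
    0 ≤ a⁻¹ * (a * ((a^2 + b^2*t^2) * s t)⁻¹) := by
  have hs := s_pos t
  have : (0:ℝ) < a^2 + b^2*t^2 := by positivity
  positivity

lemma t_integrable (ha : 0 < a) (hab : a < b) :
    IntegrableOn (fun t => a * ((a^2 + b^2*t^2) * s t)⁻¹) (Ioi (0:ℝ)) := by
  have h := integrableOn_Ioi_deriv_of_nonneg' (a := (0:ℝ))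
    (g := fun t => Real.arctan (Real.sqrt (b^2-a^2) * t / (a * s t)) / (a * Real.sqrt (b^2-a^2)))
    (g' := fun t => a⁻¹ * (a * ((a^2 + b^2*t^2) * s t)⁻¹))
    (fun t _ => G_deriv ha hab t) (fun t _ => integrand_nonneg ha t) (G_lim ha hab)
  have h2 := h.const_mul a
  apply h2.congr (Filter.Eventually.of_forall ?_)
  intro t
  field_simp

lemma t_integral (ha : 0 < a) (hab : a < b) :
    ∫ t in Ioi (0:ℝ), a * ((a^2 + b^2*t^2) * s t)⁻¹
      = Real.arctan (Real.sqrt (b^2-a^2) / a) / Real.sqrt (b^2-a^2) := by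
  have h := MeasureTheory.integral_Ioi_of_hasDerivAt_of_nonneg' (a := (0:ℝ))
    (g := fun t => Real.arctan (Real.sqrt (b^2-a^2) * t / (a * s t)) / (a * Real.sqrt (b^2-a^2)))
    (g' := fun t => a⁻¹ * (a * ((a^2 + b^2*t^2) * s t)⁻¹))
    (fun t _ => G_deriv ha hab t) (fun t _ => integrand_nonneg ha t) (G_lim ha hab)
  simp only [mul_zero, zero_div, Real.arctan_zero, sub_zero] at h
  have hc : 0 < Real.sqrt (b^2-a^2) := Real.sqrt_pos.2 (by nlinarith)
  have h2 : ∫ t in Ioi (0:ℝ), a * ((a^2 + b^2*t^2) * s t)⁻¹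
      = a * ∫ t in Ioi (0:ℝ), a⁻¹ * (a * ((a^2 + b^2*t^2) * s t)⁻¹) := by
    rw [← integral_const_mul]
    congr 1
    funext t
    field_simp
  rw [h2, h]
  field_simp

end Tint

lemma F_cont (b : ℝ) (T : ℝ) :
    Continuous (fun x : ℝ => ∫ t in (0:ℝ)..T, Real.cos (b*x*t) / s t) := by
  apply intervalIntegral.continuous_parametric_intervalIntegral_of_continuous'
  apply Continuous.div
  · exact Real.continuous_cos.comp (((continuous_const.mul continuous_fst).mul continuous_snd))
  · exact continuous_s.comp continuous_snd
  · exact fun p => (s_pos p.2).ne'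

lemma exp_integrable {a : ℝ} (ha : 0 < a) :
    IntegrableOn (fun x : ℝ => Real.exp (-(a*x))) (Ioi (0:ℝ)) :=
  (exp_neg_integrableOn_Ioi 0 ha).congr_fun (fun x _ => by simp only [neg_mul]) measurableSet_Ioi

lemma swap_eq {a b : ℝ} (ha : 0 < a) (hb : 0 < b) {T : ℝ} (hT : 0 ≤ T) :
    (∫ x in Ioi (0:ℝ), Real.exp (-(a*x)) * ∫ t in (0:ℝ)..T, Real.cos (b*x*t) / s t)
      = ∫ t in (0:ℝ)..T, a * ((a^2 + b^2*t^2) * s t)⁻¹ := by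
  have hcont : Continuous (Function.uncurry fun (x t : ℝ) =>
      Real.exp (-(a*x)) * (Real.cos (b*x*t) / s t)) := by
    apply Continuous.mul
    · exact Real.continuous_exp.comp (continuous_const.mul continuous_fst).neg
    · apply Continuous.div
      · exact Real.continuous_cos.comp ((continuous_const.mul continuous_fst).mul continuous_snd)
      · exact continuous_s.comp continuous_snd
      · exact fun p => (s_pos p.2).ne'
  have hint : Integrable (Function.uncurry fun (x t : ℝ) =>
      Real.exp (-(a*x)) * (Real.cos (b*x*t) / s t))
      ((volume.restrict (Ioi 0)).prod (volume.restrict (Ioc 0 T))) := by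
    have h1 : Integrable (fun x : ℝ => Real.exp (-(a*x))) (volume.restrict (Ioi 0)) :=
      exp_integrable ha
    have h2 : Integrable (fun _ : ℝ => (1:ℝ)) (volume.restrict (Ioc 0 T)) := by
      have : volume (Ioc (0:ℝ) T) < ⊤ := measure_Ioc_lt_top
      exact (integrableOn_const this.ne)
    have h3 := h1.mul_prod h2
    apply h3.mono' hcont.aestronglyMeasurable
    filter_upwards with p
    rw [Function.uncurry_apply_pair, Real.norm_eq_abs, abs_mul, Real.abs_exp, mul_one]
    have h4 : |Real.cos (b*p.1*p.2) / s p.2| ≤ 1 := by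
      rw [abs_div, abs_of_pos (s_pos p.2), div_le_one (s_pos p.2)]
      exact (Real.abs_cos_le_one _).trans (one_le_s p.2)
    nlinarith [Real.exp_pos (-(a*p.1)), abs_nonneg (Real.cos (b*p.1*p.2) / s p.2)]
  have hswap := MeasureTheory.integral_integral_swap hint
  simp only [intervalIntegral.integral_of_le hT]
  calc ∫ x in Ioi (0:ℝ), Real.exp (-(a*x)) * ∫ t in Ioc (0:ℝ) T, Real.cos (b*x*t) / s t
      = ∫ x in Ioi (0:ℝ), ∫ t in Ioc (0:ℝ) T, Real.exp (-(a*x)) * (Real.cos (b*x*t) / s t) := by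
        congr 1; funext x; rw [← integral_const_mul]
    _ = ∫ t in Ioc (0:ℝ) T, ∫ x in Ioi (0:ℝ), Real.exp (-(a*x)) * (Real.cos (b*x*t) / s t) := hswap
    _ = ∫ t in Ioc (0:ℝ) T, a * ((a^2 + b^2*t^2) * s t)⁻¹ := by
        congr 1; funext t
        have hrw : (fun x => Real.exp (-(a*x)) * (Real.cos (b*x*t) / s t))
            = fun x => (s t)⁻¹ * (Real.exp (-(a*x)) * Real.cos ((b*t)*x)) := by
          funext x
          rw [show b*x*t = (b*t)*x by ring]
          field_simp
        rw [hrw, integral_const_mul, laplace_cos ha (b*t)]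
        rw [show a^2 + (b*t)^2 = a^2 + b^2*t^2 by ring, mul_inv, div_eq_mul_inv]
        ring

lemma s_sqrt_eq (t : ℝ) : Real.sqrt (t^2+1) = s t := rfl

lemma main_pos (K0 : ℝ → ℝ)
    (hK0 : ∀ x ∈ Ioi (0:ℝ),
      Tendsto (fun T => ∫ t in (0:ℝ)..T, Real.cos (x * t) / Real.sqrt (t ^ 2 + 1))
        atTop (𝓝 (K0 x)))
    {a b : ℝ} (ha : 0 < a) (hab : a < b) :
    ∫ x in Ioi (0:ℝ), Real.exp (-(a * x)) * K0 (b * x)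
      = Real.arccos (a / b) / Real.sqrt (b ^ 2 - a ^ 2) := by
  have hb : 0 < b := ha.trans hab
  have hba : (0:ℝ) < b^2 - a^2 := by nlinarith
  -- integrability of the dominating function
  have hbound_meas : AEStronglyMeasurable (fun x : ℝ => Real.exp (-(a*x)) * (4 / Real.sqrt (b*x)))
      (volume.restrict (Ioi 0)) := by
    apply Measurable.aestronglyMeasurable
    apply Measurable.mul
    · exact (Real.continuous_exp.comp (continuous_const.mul continuous_id).neg).measurable
    · exact Measurable.div measurable_const
        (Real.continuous_sqrt.comp (continuous_const.mul continuous_id)).measurable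
  have hbound_int : IntegrableOn (fun x : ℝ => Real.exp (-(a*x)) * (4 / Real.sqrt (b*x)))
      (Ioi (0:ℝ)) := by
    have hsplit : Ioc (0:ℝ) 1 ∪ Ioi (1:ℝ) = Ioi (0:ℝ) := Ioc_union_Ioi_eq_Ioi zero_le_one
    rw [← hsplit]
    apply IntegrableOn.union
    · -- near 0 : bound by (4/√b) * x ^ (-1/2)
      have hrint : IntegrableOn (fun x : ℝ => (4 / Real.sqrt b) * x ^ (-(1/2) : ℝ)) (Ioc (0:ℝ) 1) := by
        have h0 : IntervalIntegrable (fun x : ℝ => x ^ (-(1/2) : ℝ)) volume 0 1 :=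
          intervalIntegral.intervalIntegrable_rpow' (by norm_num)
        exact ((intervalIntegrable_iff_integrableOn_Ioc_of_le zero_le_one).1 h0).const_mul _
      apply hrint.mono' (hbound_meas.mono_measure (Measure.restrict_mono Ioc_subset_Ioi_self le_rfl))
      filter_upwards [ae_restrict_mem measurableSet_Ioc] with x hx
      have hx0 : 0 < x := hx.1
      rw [Real.norm_eq_abs, abs_mul, Real.abs_exp, abs_div, abs_of_pos (by norm_num : (0:ℝ) < 4),
        abs_of_nonneg (Real.sqrt_nonneg (b*x))]
      have h1 : Real.exp (-(a*x)) ≤ 1 := Real.exp_le_one_iff.2 (by nlinarith)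
      have h2 : 4 / Real.sqrt (b*x) = (4 / Real.sqrt b) * x ^ (-(1/2) : ℝ) := by
        rw [Real.sqrt_mul hb.le, Real.rpow_neg hx0.le, ← Real.sqrt_eq_rpow]
        field_simp
      rw [← h2]
      have h3 : 0 < Real.sqrt (b*x) := Real.sqrt_pos.2 (by positivity)
      have h4 : 0 < 4 / Real.sqrt (b*x) := by positivity
      nlinarith [Real.exp_pos (-(a*x))]
    · -- near ∞ : bound by (4/√b) * exp(-(a x))
      have hrint : IntegrableOn (fun x : ℝ => (4 / Real.sqrt b) * Real.exp (-(a*x))) (Ioi (1:ℝ)) := by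
        apply Integrable.const_mul
        exact (exp_neg_integrableOn_Ioi 1 ha).congr_fun (fun x _ => by simp only [neg_mul]) measurableSet_Ioi
      apply hrint.mono' (hbound_meas.mono_measure (Measure.restrict_mono (Ioi_subset_Ioi zero_le_one) le_rfl))
      filter_upwards [ae_restrict_mem measurableSet_Ioi] with x hx
      have hx1 : (1:ℝ) < x := hx
      rw [Real.norm_eq_abs, abs_mul, Real.abs_exp, abs_div, abs_of_pos (by norm_num : (0:ℝ) < 4),
        abs_of_nonneg (Real.sqrt_nonneg (b*x))]
      have h3 : Real.sqrt b ≤ Real.sqrt (b*x) := Real.sqrt_le_sqrt (by nlinarith)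
      have hsb : 0 < Real.sqrt b := Real.sqrt_pos.2 hb
      have h4 : 4 / Real.sqrt (b*x) ≤ 4 / Real.sqrt b := by
        apply div_le_div_of_nonneg_left (by norm_num) hsb h3
      calc Real.exp (-(a*x)) * (4 / Real.sqrt (b*x))
          ≤ Real.exp (-(a*x)) * (4 / Real.sqrt b) := by
            apply mul_le_mul_of_nonneg_left h4 (Real.exp_pos _).le
        _ = (4 / Real.sqrt b) * Real.exp (-(a*x)) := by ring
  -- dominated convergence
  have hDCT := MeasureTheory.tendsto_integral_filter_of_dominated_convergence
    (μ := volume.restrict (Ioi (0:ℝ))) (l := atTop)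
    (F := fun (T : ℝ) (x : ℝ) => Real.exp (-(a*x)) * ∫ t in (0:ℝ)..T, Real.cos (b*x*t) / s t)
    (f := fun x => Real.exp (-(a*x)) * K0 (b*x))
    (bound := fun x => Real.exp (-(a*x)) * (4 / Real.sqrt (b*x)))
    (Eventually.of_forall (fun T =>
      ((Real.continuous_exp.comp (continuous_const.mul continuous_id).neg).mul
        (F_cont b T)).aestronglyMeasurable))
    ?hbound hbound_int ?hlim
  case hbound =>
    filter_upwards [eventually_ge_atTop (0:ℝ)] with T hT
    filter_upwards [ae_restrict_mem measurableSet_Ioi] with x hx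
    have hbx : 0 < b*x := by exact mul_pos hb hx
    rw [Real.norm_eq_abs, abs_mul, Real.abs_exp]
    apply mul_le_mul_of_nonneg_left _ (Real.exp_pos _).le
    have := uniform_bound (b*x) hbx hT
    calc |∫ t in (0:ℝ)..T, Real.cos (b*x*t) / s t|
        = |∫ t in (0:ℝ)..T, Real.cos ((b*x)*t) / s t| := by norm_num [mul_assoc]
      _ ≤ 4 / Real.sqrt (b*x) := this
  case hlim =>
    filter_upwards [ae_restrict_mem measurableSet_Ioi] with x hx
    have hbx : b*x ∈ Ioi (0:ℝ) := mul_pos hb hx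
    have := (hK0 (b*x) hbx).const_mul (Real.exp (-(a*x)))
    apply this.congr
    intro T
    congr 1
  -- identify limit of the swapped integrals
  have hswap_lim : Tendsto (fun T => ∫ x in Ioi (0:ℝ),
      Real.exp (-(a*x)) * ∫ t in (0:ℝ)..T, Real.cos (b*x*t) / s t) atTop
      (𝓝 (Real.arctan (Real.sqrt (b^2-a^2) / a) / Real.sqrt (b^2-a^2))) := by
    have h1 : Tendsto (fun T => ∫ t in (0:ℝ)..T, a * ((a^2 + b^2*t^2) * s t)⁻¹) atTop
        (𝓝 (∫ t in Ioi (0:ℝ), a * ((a^2 + b^2*t^2) * s t)⁻¹)) :=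
      intervalIntegral_tendsto_integral_Ioi 0 (t_integrable ha hab) tendsto_id
    rw [t_integral ha hab] at h1
    apply h1.congr'
    filter_upwards [eventually_ge_atTop (0:ℝ)] with T hT
    exact (swap_eq ha hb hT).symm
  have hmain := tendsto_nhds_unique hDCT hswap_lim
  rw [hmain]
  congr 1
  rw [Real.arccos_eq_arctan (div_pos ha hb)]
  congr 1
  have h1 : 1 - (a/b)^2 = (b^2-a^2)/b^2 := by field_simp
  rw [h1, Real.sqrt_div hba.le, Real.sqrt_sq hb.le]
  field_simp

theorem stmt_12' (K0 : ℝ → ℝ)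
    (hK0 : ∀ x ∈ Ioi (0:ℝ),
      Tendsto (fun T => ∫ t in (0:ℝ)..T, Real.cos (x * t) / Real.sqrt (t ^ 2 + 1))
        atTop (nhds (K0 x)))
    (a b : ℝ) (ha : 0 ≤ a) (hab : a < b) :
    ∫ x in Ioi (0:ℝ), Real.exp (-(a * x)) * K0 (b * x) =
      Real.arccos (a / b) / Real.sqrt (b ^ 2 - a ^ 2) := by
  rcases ha.eq_or_lt with h0 | hpos
  swap
  · exact main_pos K0 hK0 hpos hab
  obtain rfl : a = 0 := h0.symm
  have hb : 0 < b := hab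
  -- measurability of K0 (b * ·) on Ioi 0
  have hK0m : AEStronglyMeasurable (fun x => K0 (b*x)) (volume.restrict (Ioi (0:ℝ))) := by
    apply aestronglyMeasurable_of_tendsto_ae (u := (atTop : Filter ℕ))
      (f := fun (n : ℕ) (x : ℝ) => ∫ t in (0:ℝ)..(n:ℝ), Real.cos (b*x*t) / s t)
    · exact fun n => (F_cont b n).aestronglyMeasurable
    · filter_upwards [ae_restrict_mem measurableSet_Ioi] with x hx
      have hbx : b*x ∈ Ioi (0:ℝ) := mul_pos hb hx
      have h1 := (hK0 (b*x) hbx).comp tendsto_natCast_atTop_atTop (α := ℕ)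
      apply h1.congr
      intro n
      simp only [Function.comp_apply]
      congr 1
  -- bounds on K0
  have hK0b : ∀ x : ℝ, 0 < x → |K0 (b*x)| ≤ 4 / Real.sqrt (b*x) ∧ |K0 (b*x)| ≤ 2 / (b*x)^2 := by
    intro x hx
    have hbx : (0:ℝ) < b*x := mul_pos hb hx
    exact lim_bound hbx (hK0 (b*x) hbx)
  -- integrability of K0 (b * ·) on Ioi 0
  have hK0int : IntegrableOn (fun x => K0 (b*x)) (Ioi (0:ℝ)) := by
    have hsplit : Ioc (0:ℝ) 1 ∪ Ioi (1:ℝ) = Ioi (0:ℝ) := Ioc_union_Ioi_eq_Ioi zero_le_one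
    rw [← hsplit]
    apply IntegrableOn.union
    · have hrint : IntegrableOn (fun x : ℝ => (4 / Real.sqrt b) * x ^ (-(1/2) : ℝ)) (Ioc (0:ℝ) 1) := by
        have h0 : IntervalIntegrable (fun x : ℝ => x ^ (-(1/2) : ℝ)) volume 0 1 :=
          intervalIntegral.intervalIntegrable_rpow' (by norm_num)
        exact ((intervalIntegrable_iff_integrableOn_Ioc_of_le zero_le_one).1 h0).const_mul _
      apply hrint.mono' (hK0m.mono_measure (Measure.restrict_mono Ioc_subset_Ioi_self le_rfl))
      filter_upwards [ae_restrict_mem measurableSet_Ioc] with x hx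
      have hx0 : 0 < x := hx.1
      have h2 : 4 / Real.sqrt (b*x) = (4 / Real.sqrt b) * x ^ (-(1/2) : ℝ) := by
        rw [Real.sqrt_mul hb.le, Real.rpow_neg hx0.le, ← Real.sqrt_eq_rpow]
        field_simp
      rw [Real.norm_eq_abs, ← h2]
      exact (hK0b x hx0).1
    · have hrint : IntegrableOn (fun x : ℝ => (2 / b^2) * x ^ (-2 : ℝ)) (Ioi (1:ℝ)) :=
        (integrableOn_Ioi_rpow_of_lt (by norm_num) one_pos).const_mul _
      apply hrint.mono' (hK0m.mono_measure (Measure.restrict_mono (Ioi_subset_Ioi zero_le_one) le_rfl))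
      filter_upwards [ae_restrict_mem measurableSet_Ioi] with x hx
      have hx0 : (0:ℝ) < x := lt_trans one_pos hx
      have h2 : 2 / (b*x)^2 = (2 / b^2) * x ^ (-2 : ℝ) := by
        rw [Real.rpow_neg hx0.le, show ((2:ℝ)) = ((2:ℕ):ℝ) by norm_num, Real.rpow_natCast]
        field_simp
      rw [Real.norm_eq_abs, ← h2]
      exact (hK0b x hx0).2
  -- dominated convergence in the parameter a' → 0⁺
  have hDCT := MeasureTheory.tendsto_integral_filter_of_dominated_convergence
    (μ := volume.restrict (Ioi (0:ℝ))) (l := 𝓝[>] (0:ℝ))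
    (F := fun (a' : ℝ) (x : ℝ) => Real.exp (-(a'*x)) * K0 (b*x))
    (f := fun x => K0 (b*x))
    (bound := fun x => |K0 (b*x)|)
    (Eventually.of_forall (fun a' =>
      ((Real.continuous_exp.comp (continuous_const.mul continuous_id).neg).aestronglyMeasurable).mul hK0m))
    ?hbound hK0int.abs ?hlim
  case hbound =>
    filter_upwards [self_mem_nhdsWithin] with a' ha'
    filter_upwards [ae_restrict_mem measurableSet_Ioi] with x hx
    rw [Real.norm_eq_abs, abs_mul, Real.abs_exp]
    have h1 : Real.exp (-(a'*x)) ≤ 1 := by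
      apply Real.exp_le_one_iff.2
      have : (0:ℝ) < a' := ha'
      have : (0:ℝ) < x := hx
      nlinarith
    nlinarith [abs_nonneg (K0 (b*x)), Real.exp_pos (-(a'*x))]
  case hlim =>
    filter_upwards [ae_restrict_mem measurableSet_Ioi] with x hx
    have h1 : Tendsto (fun a' : ℝ => Real.exp (-(a'*x))) (𝓝 0) (𝓝 1) := by
      have hc : Continuous (fun a' : ℝ => Real.exp (-(a'*x))) := by
        apply Real.continuous_exp.comp
        exact (continuous_id.mul continuous_const).neg
      have h2 := hc.tendsto 0
      simpa using h2
    have h3 : Tendsto (fun a' : ℝ => Real.exp (-(a'*x)) * K0 (b*x)) (𝓝[>] (0:ℝ)) (𝓝 (1 * K0 (b*x))) :=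
      (h1.mono_left nhdsWithin_le_nhds).mul_const (K0 (b*x))
    rw [one_mul] at h3
    exact h3
  -- eventual equality with the closed form
  have heq : ∀ᶠ a' in 𝓝[>] (0:ℝ),
      (∫ x in Ioi (0:ℝ), Real.exp (-(a'*x)) * K0 (b*x))
        = Real.arccos (a'/b) / Real.sqrt (b^2-a'^2) := by
    filter_upwards [Ioo_mem_nhdsGT_of_mem (left_mem_Ico.2 hb)] with a' ha'
    exact main_pos K0 hK0 ha'.1 ha'.2
  have hRHS : Tendsto (fun a' : ℝ => Real.arccos (a'/b) / Real.sqrt (b^2-a'^2)) (𝓝[>] (0:ℝ))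
      (𝓝 (Real.arccos ((0:ℝ)/b) / Real.sqrt (b^2-(0:ℝ)^2))) := by
    apply Tendsto.mono_left _ nhdsWithin_le_nhds
    apply ContinuousAt.tendsto
    apply ContinuousAt.div
    · exact (Real.continuous_arccos.comp (continuous_id.div_const b)).continuousAt
    · exact (Real.continuous_sqrt.comp
        (continuous_const.sub (continuous_pow 2))).continuousAt
    · have : (0:ℝ) < b^2 - (0:ℝ)^2 := by nlinarith
      exact (Real.sqrt_pos.2 this).ne'
  have h4 : Tendsto (fun a' : ℝ => ∫ x in Ioi (0:ℝ), Real.exp (-(a'*x)) * K0 (b*x))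
      (𝓝[>] (0:ℝ)) (𝓝 (Real.arccos ((0:ℝ)/b) / Real.sqrt (b^2-(0:ℝ)^2))) :=
    hRHS.congr' (by filter_upwards [heq] with a' h using h.symm)
  have h5 := tendsto_nhds_unique hDCT h4
  calc ∫ x in Ioi (0:ℝ), Real.exp (-(0*x)) * K0 (b*x)
      = ∫ x in Ioi (0:ℝ), K0 (b*x) := by
        congr 1; funext x; rw [zero_mul, neg_zero, Real.exp_zero, one_mul]
    _ = Real.arccos ((0:ℝ)/b) / Real.sqrt (b^2-(0:ℝ)^2) := h5
    _ = Real.arccos ((0:ℝ)/b) / Real.sqrt (b^2-0^2) := by norm_num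

end K0aux


theorem stmt_12 (K0 : ℝ → ℝ)
    (hK0 : ∀ x ∈ Ioi (0:ℝ),
      Tendsto (fun T => ∫ t in (0:ℝ)..T, Real.cos (x * t) / Real.sqrt (t ^ 2 + 1))
        atTop (nhds (K0 x)))
    (a b : ℝ) (ha : 0 ≤ a) (hab : a < b) :
    ∫ x in Ioi (0:ℝ), Real.exp (-(a * x)) * K0 (b * x) =
      Real.arccos (a / b) / Real.sqrt (b ^ 2 - a ^ 2) := by
  exact K0aux.stmt_12' K0 hK0 a b ha hab
end
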